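/- arXiv:2510.23987 — 5 statements merged into one kernel-verified Lean document; each statement's English description precedes it below -/
import Mathlib

section
/- Suppose λ > 0 and z̃ ∈ ℂ^{r×r} is Hermitian positive definite with f(z̃) = λ·1. Let z ∈ ℂ^{d×d} denote the bottom-right d×d diagonal block of z̃ (the (3,3)-block in the decomposition ℂ^r = ℂ^d ⊕ ℂ^m ⊕ ℂ^d). Then z is positive definite, Σ_{j=1}^n aⱼ* z aⱼ < λ·1, and λ⁻¹ a₀a₀* + z⁻¹ + Σ_{i=1}^n aᵢ ( λ·1 − Σ_{j=1}^n aⱼ* z aⱼ )⁻¹ aᵢ* ≤ λ·1. -/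
noncomputable section

set_option linter.unusedSectionVars false

open scoped ComplexOrder Matrix

/-- Assemble a 3×3 block matrix over the index type `K1 ⊕ K2 ⊕ K3`. -/
def blocks3 {K1 K2 K3 : Type}
    (X11 : Matrix K1 K1 ℂ) (X12 : Matrix K1 K2 ℂ) (X13 : Matrix K1 K3 ℂ)
    (X21 : Matrix K2 K1 ℂ) (X22 : Matrix K2 K2 ℂ) (X23 : Matrix K2 K3 ℂ)
    (X31 : Matrix K3 K1 ℂ) (X32 : Matrix K3 K2 ℂ) (X33 : Matrix K3 K3 ℂ) :
    Matrix (K1 ⊕ K2 ⊕ K3) (K1 ⊕ K2 ⊕ K3) ℂ :=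
  Matrix.of fun p q =>
    match p, q with
    | .inl i, .inl j => X11 i j
    | .inl i, .inr (.inl j) => X12 i j
    | .inl i, .inr (.inr j) => X13 i j
    | .inr (.inl i), .inl j => X21 i j
    | .inr (.inl i), .inr (.inl j) => X22 i j
    | .inr (.inl i), .inr (.inr j) => X23 i j
    | .inr (.inr i), .inl j => X31 i j
    | .inr (.inr i), .inr (.inl j) => X32 i j
    | .inr (.inr i), .inr (.inr j) => X33 i j
/-- The index type realizing the block decomposition `ℂ^r = ℂ^d ⊕ ℂ^m ⊕ ℂ^d`. -/
abbrev R3 (d m : ℕ) : Type := Fin d ⊕ Fin m ⊕ Fin d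

/-- The matrix `ã₀`, with `(1,3)`-block `a₀*` and `(3,1)`-block `a₀`. -/
def tA0 {d m : ℕ} (a₀ : Matrix (Fin d) (Fin d) ℂ) : Matrix (R3 d m) (R3 d m) ℂ :=
  blocks3 0 0 a₀ᴴ 0 0 0 a₀ 0 0

/-- The matrix `ãᵢ`, with `(2,3)`-block `aᵢ*` and `(3,2)`-block `aᵢ`. -/
def tA {d m : ℕ} (ai : Matrix (Fin d) (Fin m) ℂ) : Matrix (R3 d m) (R3 d m) ℂ :=
  blocks3 0 0 0 0 0 aiᴴ 0 ai 0

/-- `f(z̃) = ã₀ + z̃⁻¹ + ∑ᵢ ãᵢ z̃ ãᵢ`. -/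
def fTilde {n d m : ℕ} (a₀ : Matrix (Fin d) (Fin d) ℂ)
    (a : Fin n → Matrix (Fin d) (Fin m) ℂ) (zt : Matrix (R3 d m) (R3 d m) ℂ) :
    Matrix (R3 d m) (R3 d m) ℂ :=
  tA0 a₀ + zt⁻¹ + ∑ i, tA (a i) * zt * tA (a i)

section helpers
variable {ι κ κ' : Type} [Fintype ι] [Fintype κ] [Fintype κ'] [DecidableEq ι] [DecidableEq κ]
  [DecidableEq κ']

/-- extension of a vector by zero along an injection -/
def extE (e : κ → ι) (x : κ → ℂ) : ι → ℂ := Function.extend e x 0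

lemma star_extE (e : κ → ι) (x : κ → ℂ) : star (extE e x) = extE e (star x) := by
  funext i
  simp only [Pi.star_apply, extE, Function.extend_def]
  split <;> simp

lemma extE_apply_mem {e : κ → ι} (he : Function.Injective e) (x : κ → ℂ) (k : κ) :
    extE e x (e k) = x k := he.extend_apply _ _ _

lemma extE_apply_not {e : κ → ι} {i : ι} (h : ¬ ∃ k, e k = i) (x : κ → ℂ) :
    extE e x i = 0 := Function.extend_apply' _ _ _ h

lemma extE_dotProduct (e : κ → ι) (he : Function.Injective e) (x : κ → ℂ) (v : ι → ℂ) :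
    extE e x ⬝ᵥ v = x ⬝ᵥ (v ∘ e) := by
  classical
  have h1 : ∑ i, extE e x i * v i = ∑ i ∈ Finset.univ.image e, extE e x i * v i := by
    refine (Finset.sum_subset (Finset.subset_univ _) ?_).symm
    intro i _ hi
    have hne : ¬ ∃ k, e k = i := fun ⟨k, hk⟩ => hi (Finset.mem_image.mpr ⟨k, Finset.mem_univ _, hk⟩)
    rw [extE_apply_not hne, zero_mul]
  rw [dotProduct, h1, Finset.sum_image (fun a _ b _ h => he h)]
  simp [dotProduct, extE_apply_mem he]

lemma extE_quad (M : Matrix ι ι ℂ) (e : κ → ι) (he : Function.Injective e)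
    (f : κ' → ι) (hf : Function.Injective f) (x : κ → ℂ) (u : κ' → ℂ) :
    star (extE e x) ⬝ᵥ M *ᵥ extE f u = star x ⬝ᵥ (M.submatrix e f) *ᵥ u := by
  rw [star_extE, extE_dotProduct e he]
  congr 1
  funext k
  show (fun j => M (e k) j) ⬝ᵥ extE f u = _
  rw [dotProduct_comm, extE_dotProduct f hf, dotProduct_comm]
  rfl

lemma posDef_submatrix {M : Matrix ι ι ℂ} (hM : M.PosDef) (e : κ → ι)
    (he : Function.Injective e) : (M.submatrix e e).PosDef := by
  refine Matrix.PosDef.of_dotProduct_mulVec_pos (hM.1.submatrix e) fun x hx => ?_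
  rw [← extE_quad M e he e he x x]
  refine hM.dotProduct_mulVec_pos fun h0 => hx ?_
  funext k
  have := congrFun h0 (e k)
  rwa [extE_apply_mem he, Pi.zero_apply] at this

lemma key {M : Matrix ι ι ℂ} (hM : M.PosDef) (e : κ → ι) (he : Function.Injective e)
    (y : ι → ℂ) :
    star (y ∘ e) ⬝ᵥ ((M⁻¹).submatrix e e)⁻¹ *ᵥ (y ∘ e) ≤ star y ⬝ᵥ M *ᵥ y := by
  set x : κ → ℂ := y ∘ e with hx
  set N : Matrix κ κ ℂ := (M⁻¹).submatrix e e with hNdef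
  have hN : N.PosDef := posDef_submatrix hM.inv e he
  set c : ι → ℂ := extE e (N⁻¹ *ᵥ x) with hc
  set v : ι → ℂ := M⁻¹ *ᵥ c with hv
  have hMdet : IsUnit M.det := (Matrix.isUnit_iff_isUnit_det M).mp hM.isUnit
  have hNdet : IsUnit N.det := (Matrix.isUnit_iff_isUnit_det N).mp hN.isUnit
  have hMv : M *ᵥ v = c := by
    rw [hv, Matrix.mulVec_mulVec, Matrix.mul_nonsing_inv _ hMdet, Matrix.one_mulVec]
  have hflip : star (N⁻¹ *ᵥ x) ⬝ᵥ x = star x ⬝ᵥ N⁻¹ *ᵥ x := by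
    rw [Matrix.star_mulVec, hN.inv.1.eq, ← Matrix.dotProduct_mulVec]
  have hsc : star c ⬝ᵥ y = star x ⬝ᵥ N⁻¹ *ᵥ x := by
    rw [hc, star_extE, extE_dotProduct e he, ← hx, ← hflip]
  have hyc : star y ⬝ᵥ c = star x ⬝ᵥ N⁻¹ *ᵥ x := by
    rw [hc, dotProduct_comm, extE_dotProduct e he, dotProduct_comm]
    rfl
  have hsv : star v = star c ᵥ* M⁻¹ := by
    rw [hv, Matrix.star_mulVec, hM.inv.1.eq]
  have ht2 : star y ⬝ᵥ M *ᵥ v = star x ⬝ᵥ N⁻¹ *ᵥ x := by rw [hMv]; exact hyc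
  have ht3 : star v ⬝ᵥ M *ᵥ y = star x ⬝ᵥ N⁻¹ *ᵥ x := by
    rw [hsv, Matrix.dotProduct_mulVec, Matrix.vecMul_vecMul,
      Matrix.nonsing_inv_mul _ hMdet, Matrix.vecMul_one]
    exact hsc
  have ht4 : star v ⬝ᵥ M *ᵥ v = star x ⬝ᵥ N⁻¹ *ᵥ x := by
    rw [hMv, hsv, ← Matrix.dotProduct_mulVec, hc,
      extE_quad _ e he e he, ← hNdef, Matrix.mulVec_mulVec,
      Matrix.mul_nonsing_inv _ hNdet, Matrix.one_mulVec]
    exact hflip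
  have h0 : 0 ≤ star (y - v) ⬝ᵥ M *ᵥ (y - v) := hM.posSemidef.dotProduct_mulVec_nonneg _
  have hexp : star (y - v) ⬝ᵥ M *ᵥ (y - v)
      = star y ⬝ᵥ M *ᵥ y - star x ⬝ᵥ N⁻¹ *ᵥ x := by
    rw [star_sub, Matrix.mulVec_sub, sub_dotProduct, dotProduct_sub,
      dotProduct_sub, ht2, ht3, ht4]
    ring
  rw [hexp] at h0
  exact sub_nonneg.mp h0

end helpers

section blocks
variable {d m : ℕ}

lemma tA0_13 (a₀ : Matrix (Fin d) (Fin d) ℂ) :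
    (tA0 (m := m) a₀).submatrix (Sum.inl) (Sum.inr ∘ Sum.inr) = a₀ᴴ := rfl
lemma tA0_11 (a₀ : Matrix (Fin d) (Fin d) ℂ) :
    (tA0 (m := m) a₀).submatrix (Sum.inl) (Sum.inl) = 0 := rfl
lemma tA0_22 (a₀ : Matrix (Fin d) (Fin d) ℂ) :
    (tA0 (m := m) a₀).submatrix (Sum.inr ∘ Sum.inl) (Sum.inr ∘ Sum.inl) = 0 := rfl
lemma tA0_33 (a₀ : Matrix (Fin d) (Fin d) ℂ) :
    (tA0 (m := m) a₀).submatrix (Sum.inr ∘ Sum.inr) (Sum.inr ∘ Sum.inr) = 0 := rfl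

lemma tA_mul_mul_33 (ai : Matrix (Fin d) (Fin m) ℂ) (M : Matrix (R3 d m) (R3 d m) ℂ) :
    (tA ai * M * tA ai).submatrix (Sum.inr ∘ Sum.inr) (Sum.inr ∘ Sum.inr)
      = ai * M.submatrix (Sum.inr ∘ Sum.inl) (Sum.inr ∘ Sum.inl) * aiᴴ := by
  ext x y
  simp [Matrix.mul_apply, tA, blocks3, Fintype.sum_sum_type, Finset.sum_mul, Finset.mul_sum]

lemma tA_mul_mul_22 (ai : Matrix (Fin d) (Fin m) ℂ) (M : Matrix (R3 d m) (R3 d m) ℂ) :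
    (tA ai * M * tA ai).submatrix (Sum.inr ∘ Sum.inl) (Sum.inr ∘ Sum.inl)
      = aiᴴ * M.submatrix (Sum.inr ∘ Sum.inr) (Sum.inr ∘ Sum.inr) * ai := by
  ext x y
  simp [Matrix.mul_apply, tA, blocks3, Fintype.sum_sum_type, Finset.sum_mul, Finset.mul_sum]

lemma tA_mul_mul_13 (ai : Matrix (Fin d) (Fin m) ℂ) (M : Matrix (R3 d m) (R3 d m) ℂ) :
    (tA ai * M * tA ai).submatrix (Sum.inl) (Sum.inr ∘ Sum.inr) = 0 := by
  ext x y
  simp [Matrix.mul_apply, tA, blocks3, Fintype.sum_sum_type]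

lemma tA_mul_mul_11 (ai : Matrix (Fin d) (Fin m) ℂ) (M : Matrix (R3 d m) (R3 d m) ℂ) :
    (tA ai * M * tA ai).submatrix (Sum.inl) (Sum.inl) = 0 := by
  ext x y
  simp [Matrix.mul_apply, tA, blocks3, Fintype.sum_sum_type]

lemma smulone_11 (lam : ℝ) :
    (lam • (1 : Matrix (R3 d m) (R3 d m) ℂ)).submatrix (Sum.inl) (Sum.inl) = lam • 1 := by
  ext x y
  by_cases h : x = y <;> simp [Matrix.one_apply, h]

lemma smulone_22 (lam : ℝ) :
    (lam • (1 : Matrix (R3 d m) (R3 d m) ℂ)).submatrix (Sum.inr ∘ Sum.inl) (Sum.inr ∘ Sum.inl)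
      = lam • 1 := by
  ext x y
  by_cases h : x = y <;> simp [Matrix.one_apply, h]

lemma smulone_33 (lam : ℝ) :
    (lam • (1 : Matrix (R3 d m) (R3 d m) ℂ)).submatrix (Sum.inr ∘ Sum.inr) (Sum.inr ∘ Sum.inr)
      = lam • 1 := by
  ext x y
  by_cases h : x = y <;> simp [Matrix.one_apply, h]

lemma smulone_13 (lam : ℝ) :
    (lam • (1 : Matrix (R3 d m) (R3 d m) ℂ)).submatrix (Sum.inl) (Sum.inr ∘ Sum.inr) = 0 := by
  ext x y
  simp [Matrix.one_apply]

lemma submatrix_sum {n : ℕ} {α β : Type} (f : Fin n → Matrix (R3 d m) (R3 d m) ℂ)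
    (e : α → R3 d m) (g : β → R3 d m) :
    (∑ i, f i).submatrix e g = ∑ i, (f i).submatrix e g := by
  ext x y
  simp [Matrix.sum_apply]

end blocks

/-- Lemma 3.3: consequences of the identity `f(z̃) = λ·1` for the bottom-right block `z`
of a positive definite `z̃`. -/
theorem schur_reduction_upper (n d m : ℕ)
    (a₀ : Matrix (Fin d) (Fin d) ℂ) (a : Fin n → Matrix (Fin d) (Fin m) ℂ)
    (lam : ℝ) (hlam : 0 < lam)
    (zt : Matrix (R3 d m) (R3 d m) ℂ) (hzt : zt.PosDef)
    (hf : fTilde a₀ a zt = lam • 1)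
    (z : Matrix (Fin d) (Fin d) ℂ)
    (hz : z = zt.submatrix (Sum.inr ∘ Sum.inr) (Sum.inr ∘ Sum.inr)) :
    z.PosDef ∧
    (lam • 1 - ∑ j, (a j)ᴴ * z * a j).PosDef ∧
    (lam • 1 - (lam⁻¹ • (a₀ * a₀ᴴ) + z⁻¹ +
      ∑ i, a i * (lam • 1 - ∑ j, (a j)ᴴ * z * a j)⁻¹ * (a i)ᴴ)).PosSemidef := by
  classical
  subst hz
  have he2 : Function.Injective (Sum.inr ∘ Sum.inl : Fin m → R3 d m) :=
    Sum.inr_injective.comp Sum.inl_injective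
  have he3 : Function.Injective (Sum.inr ∘ Sum.inr : Fin d → R3 d m) :=
    Sum.inr_injective.comp Sum.inr_injective
  have he1 : Function.Injective (Sum.inl : Fin d → R3 d m) := Sum.inl_injective
  have hw : (zt⁻¹).PosDef := hzt.inv
  have hdet : IsUnit zt.det := (Matrix.isUnit_iff_isUnit_det zt).mp hzt.isUnit
  have hwinv : (zt⁻¹)⁻¹ = zt := Matrix.nonsing_inv_nonsing_inv _ hdet
  -- block equations
  have E33 : (zt⁻¹).submatrix (Sum.inr ∘ Sum.inr) (Sum.inr ∘ Sum.inr)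
      + ∑ i, a i * zt.submatrix (Sum.inr ∘ Sum.inl) (Sum.inr ∘ Sum.inl) * (a i)ᴴ
      = lam • 1 := by
    have h := congrArg (fun M : Matrix (R3 d m) (R3 d m) ℂ =>
      M.submatrix (Sum.inr ∘ Sum.inr : Fin d → R3 d m) (Sum.inr ∘ Sum.inr)) hf
    simpa [fTilde, Matrix.submatrix_add, submatrix_sum, tA0_33, tA_mul_mul_33, smulone_33] using h
  have E22 : (zt⁻¹).submatrix (Sum.inr ∘ Sum.inl) (Sum.inr ∘ Sum.inl)
      + ∑ i, (a i)ᴴ * zt.submatrix (Sum.inr ∘ Sum.inr) (Sum.inr ∘ Sum.inr) * a i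
      = lam • 1 := by
    have h := congrArg (fun M : Matrix (R3 d m) (R3 d m) ℂ =>
      M.submatrix (Sum.inr ∘ Sum.inl : Fin m → R3 d m) (Sum.inr ∘ Sum.inl)) hf
    simpa [fTilde, Matrix.submatrix_add, submatrix_sum, tA0_22, tA_mul_mul_22, smulone_22] using h
  have E11 : (zt⁻¹).submatrix (Sum.inl : Fin d → R3 d m) (Sum.inl) = lam • 1 := by
    have h := congrArg (fun M : Matrix (R3 d m) (R3 d m) ℂ =>
      M.submatrix (Sum.inl : Fin d → R3 d m) (Sum.inl)) hf
    simpa [fTilde, Matrix.submatrix_add, submatrix_sum, tA0_11, tA_mul_mul_11, smulone_11] using h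
  have E13 : (zt⁻¹).submatrix (Sum.inl : Fin d → R3 d m) (Sum.inr ∘ Sum.inr) = -a₀ᴴ := by
    have h := congrArg (fun M : Matrix (R3 d m) (R3 d m) ℂ =>
      M.submatrix (Sum.inl : Fin d → R3 d m) (Sum.inr ∘ Sum.inr)) hf
    simp only [fTilde, Matrix.submatrix_add, submatrix_sum, tA0_13, tA_mul_mul_13,
      smulone_13, Finset.sum_const_zero, add_zero, Pi.add_apply] at h
    linear_combination (norm := abel) h
  have E31 : (zt⁻¹).submatrix (Sum.inr ∘ Sum.inr : Fin d → R3 d m) (Sum.inl) = -a₀ := by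
    have h : (zt⁻¹).submatrix (Sum.inr ∘ Sum.inr : Fin d → R3 d m) (Sum.inl)
        = ((zt⁻¹).submatrix (Sum.inl : Fin d → R3 d m) (Sum.inr ∘ Sum.inr))ᴴ := by
      rw [Matrix.conjTranspose_submatrix, hw.1.eq]
    rw [h, E13, Matrix.conjTranspose_neg, Matrix.conjTranspose_conjTranspose]
  have hW22 : lam • (1 : Matrix (Fin m) (Fin m) ℂ)
      - ∑ j, (a j)ᴴ * zt.submatrix (Sum.inr ∘ Sum.inr) (Sum.inr ∘ Sum.inr) * a j
      = (zt⁻¹).submatrix (Sum.inr ∘ Sum.inl) (Sum.inr ∘ Sum.inl) := by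
    rw [← E22, add_sub_cancel_right]
  refine ⟨posDef_submatrix hzt _ he3, ?_, ?_⟩
  · rw [hW22]
    exact posDef_submatrix hw _ he2
  · rw [hW22, ← E33]
    have hsplit : ((zt⁻¹).submatrix (Sum.inr ∘ Sum.inr) (Sum.inr ∘ Sum.inr)
          + ∑ i, a i * zt.submatrix (Sum.inr ∘ Sum.inl) (Sum.inr ∘ Sum.inl) * (a i)ᴴ)
        - (lam⁻¹ • (a₀ * a₀ᴴ) + (zt.submatrix (Sum.inr ∘ Sum.inr) (Sum.inr ∘ Sum.inr))⁻¹
          + ∑ i, a i * ((zt⁻¹).submatrix (Sum.inr ∘ Sum.inl) (Sum.inr ∘ Sum.inl))⁻¹ * (a i)ᴴ)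
        = ((zt⁻¹).submatrix (Sum.inr ∘ Sum.inr) (Sum.inr ∘ Sum.inr)
            - lam⁻¹ • (a₀ * a₀ᴴ)
            - (zt.submatrix (Sum.inr ∘ Sum.inr) (Sum.inr ∘ Sum.inr))⁻¹)
          + ∑ i, a i * (zt.submatrix (Sum.inr ∘ Sum.inl) (Sum.inr ∘ Sum.inl)
              - ((zt⁻¹).submatrix (Sum.inr ∘ Sum.inl) (Sum.inr ∘ Sum.inl))⁻¹) * (a i)ᴴ := by
      simp only [Matrix.mul_sub, Matrix.sub_mul, Finset.sum_sub_distrib]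
      abel
    rw [hsplit]
    have hz3 : (zt.submatrix (Sum.inr ∘ Sum.inr) (Sum.inr ∘ Sum.inr)).PosDef :=
      posDef_submatrix hzt _ he3
    have hw22 : ((zt⁻¹).submatrix (Sum.inr ∘ Sum.inl) (Sum.inr ∘ Sum.inl)).PosDef :=
      posDef_submatrix hw _ he2
    apply Matrix.PosSemidef.add
    · -- the Schur-complement part
      have hlam0 : (lam : ℂ) ≠ 0 := Complex.ofReal_ne_zero.mpr hlam.ne'
      refine Matrix.PosSemidef.of_dotProduct_mulVec_nonneg (Matrix.IsHermitian.sub (Matrix.IsHermitian.sub (hw.1.submatrix _) ?_)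
        hz3.inv.1) fun x => ?_
      · -- hermitian of lam⁻¹ • (a₀ * a₀ᴴ)
        show _ᴴ = _
        rw [Matrix.conjTranspose_smul, star_trivial,
          (Matrix.isHermitian_mul_conjTranspose_self a₀).eq]
      · -- pointwise inequality
        set u : Fin d → ℂ := (lam : ℂ)⁻¹ • (a₀ᴴ *ᵥ x) with hu
        set s : ℂ := star x ⬝ᵥ (a₀ * a₀ᴴ) *ᵥ x with hs
        have hvv : star (a₀ᴴ *ᵥ x) ⬝ᵥ (a₀ᴴ *ᵥ x) = s := by
          rw [Matrix.star_mulVec, Matrix.conjTranspose_conjTranspose,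
            Matrix.dotProduct_mulVec, Matrix.vecMul_vecMul, hs, Matrix.dotProduct_mulVec]
        have hsu : star u = (lam : ℂ)⁻¹ • star (a₀ᴴ *ᵥ x) := by
          rw [hu, star_smul]
          congr 1
          simp [RCLike.star_def, Complex.conj_ofReal]
        set y : R3 d m → ℂ := extE (Sum.inl) u + extE (Sum.inr ∘ Sum.inr) x with hy
        have hycomp : y ∘ (Sum.inr ∘ Sum.inr : Fin d → R3 d m) = x := by
          funext k
          have h1 : extE (Sum.inl : Fin d → R3 d m) u (Sum.inr (Sum.inr k)) = 0 :=
            extE_apply_not (by simp) u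
          have h2 : extE (Sum.inr ∘ Sum.inr : Fin d → R3 d m) x ((Sum.inr ∘ Sum.inr) k)
              = x k := extE_apply_mem he3 x k
          simp only [hy, Function.comp_apply, Pi.add_apply] at *
          rw [h1, h2, zero_add]
        have hk := key hw _ he3 y
        rw [hycomp, hwinv] at hk
        have hrhs : star y ⬝ᵥ (zt⁻¹) *ᵥ y
            = star x ⬝ᵥ ((zt⁻¹).submatrix (Sum.inr ∘ Sum.inr) (Sum.inr ∘ Sum.inr)) *ᵥ x
              - (lam : ℂ)⁻¹ * s := by
          rw [hy, star_add, Matrix.mulVec_add, add_dotProduct,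
            dotProduct_add, dotProduct_add,
            extE_quad _ _ he1 _ he1, extE_quad _ _ he1 _ he3,
            extE_quad _ _ he3 _ he1, extE_quad _ _ he3 _ he3,
            E11, E13, E31]
          have t11 : star u ⬝ᵥ (lam • (1 : Matrix (Fin d) (Fin d) ℂ)) *ᵥ u
              = (lam : ℂ) * ((lam : ℂ)⁻¹ * ((lam : ℂ)⁻¹ * s)) := by
            rw [Matrix.smul_mulVec, Matrix.one_mulVec, dotProduct_smul, hsu, hu,
              smul_dotProduct, dotProduct_smul, hvv]
            simp [Complex.real_smul, smul_eq_mul]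
          have t13 : star u ⬝ᵥ (-a₀ᴴ) *ᵥ x = -((lam : ℂ)⁻¹ * s) := by
            rw [Matrix.neg_mulVec, dotProduct_neg, hsu, smul_dotProduct,
              hvv, smul_eq_mul]
          have t31 : star x ⬝ᵥ (-a₀) *ᵥ u = -((lam : ℂ)⁻¹ * s) := by
            rw [Matrix.neg_mulVec, dotProduct_neg, hu, Matrix.mulVec_smul,
              dotProduct_smul, Matrix.mulVec_mulVec, ← hs, smul_eq_mul]
          rw [t11, t13, t31]
          field_simp
          ring
        rw [hrhs] at hk
        rw [Matrix.sub_mulVec, Matrix.sub_mulVec, dotProduct_sub,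
          dotProduct_sub]
        have hmid : star x ⬝ᵥ (lam⁻¹ • (a₀ * a₀ᴴ)) *ᵥ x = (lam : ℂ)⁻¹ * s := by
          rw [Matrix.smul_mulVec, dotProduct_smul, ← hs]
          simp [Complex.real_smul, Complex.ofReal_inv]
        rw [hmid, sub_sub, sub_nonneg]
        exact le_sub_iff_add_le'.mp hk
    · -- sum of psd terms
      refine Finset.sum_induction _ _ (fun A B hA hB => hA.add hB) Matrix.PosSemidef.zero
        fun i _ => ?_
      refine Matrix.PosSemidef.mul_mul_conjTranspose_same ?_ (a i)
      refine Matrix.PosSemidef.of_dotProduct_mulVec_nonneg (Matrix.IsHermitian.sub (hzt.1.submatrix _) hw22.inv.1) fun x => ?_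
      rw [Matrix.sub_mulVec, dotProduct_sub, sub_nonneg]
      have hk := key hzt _ he2 (extE (Sum.inr ∘ Sum.inl) x)
      have hcomp : (extE (Sum.inr ∘ Sum.inl : Fin m → R3 d m) x) ∘ (Sum.inr ∘ Sum.inl) = x := by
        funext k
        exact extE_apply_mem he2 x k
      rw [hcomp, extE_quad _ _ he2 _ he2] at hk
      exact hk
end
end

section
/- Let λ > 0 and let z ∈ ℂ^{d×d} be Hermitian positive definite with Σ_{j=1}^n aⱼ* z aⱼ < λ·1. Define g(λ;z) ∈ ℂ^{r×r} as the Hermitian matrix with (1,1)-block λ⁻¹·1 + λ⁻² a₀* z a₀, (1,3)-block λ⁻¹ a₀* z, (3,1)-block λ⁻¹ z a₀, (2,2)-block (λ·1 − Σ_{j=1}^n aⱼ* z aⱼ)⁻¹, (3,3)-block z, and all other blocks zero. Then g(λ;z) is positive definite, and f(g(λ;z)) is the block-diagonal matrix with diagonal blocks λ·1_d, λ·1_m, and λ⁻¹ a₀a₀* + z⁻¹ + Σ_{i=1}^n aᵢ ( λ·1 − Σ_{j=1}^n aⱼ* z aⱼ )⁻¹ aᵢ*. -/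
noncomputable section

open scoped ComplexOrder Matrix

section Helpers
set_option linter.unusedSectionVars false
variable {K1 K2 K3 : Type} [Fintype K1] [Fintype K2] [Fintype K3]

theorem blocks3_ext {A11 B11 : Matrix K1 K1 ℂ} {A12 B12 : Matrix K1 K2 ℂ} {A13 B13 : Matrix K1 K3 ℂ}
    {A21 B21 : Matrix K2 K1 ℂ} {A22 B22 : Matrix K2 K2 ℂ} {A23 B23 : Matrix K2 K3 ℂ}
    {A31 B31 : Matrix K3 K1 ℂ} {A32 B32 : Matrix K3 K2 ℂ} {A33 B33 : Matrix K3 K3 ℂ}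
    (h11 : A11 = B11) (h12 : A12 = B12) (h13 : A13 = B13)
    (h21 : A21 = B21) (h22 : A22 = B22) (h23 : A23 = B23)
    (h31 : A31 = B31) (h32 : A32 = B32) (h33 : A33 = B33) :
    blocks3 A11 A12 A13 A21 A22 A23 A31 A32 A33 = blocks3 B11 B12 B13 B21 B22 B23 B31 B32 B33 := by
  subst h11 h12 h13 h21 h22 h23 h31 h32 h33; rfl

theorem blocks3_mul (A11 : Matrix K1 K1 ℂ) (A12 : Matrix K1 K2 ℂ) (A13 : Matrix K1 K3 ℂ)
    (A21 : Matrix K2 K1 ℂ) (A22 : Matrix K2 K2 ℂ) (A23 : Matrix K2 K3 ℂ)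
    (A31 : Matrix K3 K1 ℂ) (A32 : Matrix K3 K2 ℂ) (A33 : Matrix K3 K3 ℂ)
    (B11 : Matrix K1 K1 ℂ) (B12 : Matrix K1 K2 ℂ) (B13 : Matrix K1 K3 ℂ)
    (B21 : Matrix K2 K1 ℂ) (B22 : Matrix K2 K2 ℂ) (B23 : Matrix K2 K3 ℂ)
    (B31 : Matrix K3 K1 ℂ) (B32 : Matrix K3 K2 ℂ) (B33 : Matrix K3 K3 ℂ) :
    blocks3 A11 A12 A13 A21 A22 A23 A31 A32 A33 * blocks3 B11 B12 B13 B21 B22 B23 B31 B32 B33 =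
    blocks3 (A11*B11 + A12*B21 + A13*B31) (A11*B12 + A12*B22 + A13*B32) (A11*B13 + A12*B23 + A13*B33)
      (A21*B11 + A22*B21 + A23*B31) (A21*B12 + A22*B22 + A23*B32) (A21*B13 + A22*B23 + A23*B33)
      (A31*B11 + A32*B21 + A33*B31) (A31*B12 + A32*B22 + A33*B32) (A31*B13 + A32*B23 + A33*B33) := by
  ext p q
  rcases p with i | i | i <;> rcases q with j | j | j <;>
    simp [blocks3, Matrix.mul_apply, Fintype.sum_sum_type, Matrix.add_apply, add_assoc]

theorem blocks3_add (A11 : Matrix K1 K1 ℂ) (A12 : Matrix K1 K2 ℂ) (A13 : Matrix K1 K3 ℂ)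
    (A21 : Matrix K2 K1 ℂ) (A22 : Matrix K2 K2 ℂ) (A23 : Matrix K2 K3 ℂ)
    (A31 : Matrix K3 K1 ℂ) (A32 : Matrix K3 K2 ℂ) (A33 : Matrix K3 K3 ℂ)
    (B11 : Matrix K1 K1 ℂ) (B12 : Matrix K1 K2 ℂ) (B13 : Matrix K1 K3 ℂ)
    (B21 : Matrix K2 K1 ℂ) (B22 : Matrix K2 K2 ℂ) (B23 : Matrix K2 K3 ℂ)
    (B31 : Matrix K3 K1 ℂ) (B32 : Matrix K3 K2 ℂ) (B33 : Matrix K3 K3 ℂ) :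
    blocks3 A11 A12 A13 A21 A22 A23 A31 A32 A33 + blocks3 B11 B12 B13 B21 B22 B23 B31 B32 B33 =
    blocks3 (A11+B11) (A12+B12) (A13+B13) (A21+B21) (A22+B22) (A23+B23) (A31+B31) (A32+B32) (A33+B33) := by
  ext p q
  rcases p with i | i | i <;> rcases q with j | j | j <;> simp [blocks3]

theorem blocks3_one [DecidableEq K1] [DecidableEq K2] [DecidableEq K3] :
    (1 : Matrix (K1 ⊕ K2 ⊕ K3) (K1 ⊕ K2 ⊕ K3) ℂ) = blocks3 1 0 0 0 1 0 0 0 1 := by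
  ext p q
  rcases p with i | i | i <;> rcases q with j | j | j <;>
    simp [blocks3, Matrix.one_apply]

theorem blocks3_conjTranspose (A11 : Matrix K1 K1 ℂ) (A12 : Matrix K1 K2 ℂ) (A13 : Matrix K1 K3 ℂ)
    (A21 : Matrix K2 K1 ℂ) (A22 : Matrix K2 K2 ℂ) (A23 : Matrix K2 K3 ℂ)
    (A31 : Matrix K3 K1 ℂ) (A32 : Matrix K3 K2 ℂ) (A33 : Matrix K3 K3 ℂ) :
    (blocks3 A11 A12 A13 A21 A22 A23 A31 A32 A33)ᴴ =
    blocks3 A11ᴴ A21ᴴ A31ᴴ A12ᴴ A22ᴴ A32ᴴ A13ᴴ A23ᴴ A33ᴴ := by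
  ext p q
  rcases p with i | i | i <;> rcases q with j | j | j <;> simp [blocks3, Matrix.conjTranspose_apply]

theorem blocks3_sum {ι : Type*} (s : Finset ι)
    (f11 : ι → Matrix K1 K1 ℂ) (f12 : ι → Matrix K1 K2 ℂ) (f13 : ι → Matrix K1 K3 ℂ)
    (f21 : ι → Matrix K2 K1 ℂ) (f22 : ι → Matrix K2 K2 ℂ) (f23 : ι → Matrix K2 K3 ℂ)
    (f31 : ι → Matrix K3 K1 ℂ) (f32 : ι → Matrix K3 K2 ℂ) (f33 : ι → Matrix K3 K3 ℂ) :
    ∑ i ∈ s, blocks3 (f11 i) (f12 i) (f13 i) (f21 i) (f22 i) (f23 i) (f31 i) (f32 i) (f33 i) =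
    blocks3 (∑ i ∈ s, f11 i) (∑ i ∈ s, f12 i) (∑ i ∈ s, f13 i) (∑ i ∈ s, f21 i) (∑ i ∈ s, f22 i)
      (∑ i ∈ s, f23 i) (∑ i ∈ s, f31 i) (∑ i ∈ s, f32 i) (∑ i ∈ s, f33 i) := by
  ext p q
  rcases p with i | i | i <;> rcases q with j | j | j <;>
    simp [blocks3, Matrix.sum_apply]

theorem posDef_conj {k : Type} [Fintype k] [DecidableEq k] {M N N' : Matrix k k ℂ}
    (hM : M.PosDef) (hN : N' * N = 1) : (Nᴴ * M * N).PosDef := by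
  refine Matrix.PosDef.of_dotProduct_mulVec_pos (Matrix.isHermitian_conjTranspose_mul_mul N hM.1) fun x hx => ?_
  have hNx : N *ᵥ x ≠ 0 := by
    intro h
    apply hx
    have : (N' * N) *ᵥ x = N' *ᵥ (N *ᵥ x) := by rw [Matrix.mulVec_mulVec]
    rw [hN, Matrix.one_mulVec, h, Matrix.mulVec_zero] at this
    exact this
  simpa only [Matrix.star_mulVec, Matrix.dotProduct_mulVec, Matrix.vecMul_vecMul]
    using hM.dotProduct_mulVec_pos hNx

theorem posDef_fromBlocks {k l : Type} [Fintype k] [DecidableEq k] [Fintype l] [DecidableEq l]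
    {A : Matrix k k ℂ} {D : Matrix l l ℂ} (hA : A.PosDef) (hD : D.PosDef) :
    (Matrix.fromBlocks A 0 0 D).PosDef := by
  refine Matrix.PosDef.of_dotProduct_mulVec_pos ?_ ?_
  · rw [Matrix.IsHermitian, Matrix.fromBlocks_conjTranspose, Matrix.conjTranspose_zero,
      Matrix.conjTranspose_zero, hA.1, hD.1]
  · intro x hx
    have hsplit : star x ⬝ᵥ (Matrix.fromBlocks A 0 0 D) *ᵥ x =
        star (x ∘ Sum.inl) ⬝ᵥ A *ᵥ (x ∘ Sum.inl) + star (x ∘ Sum.inr) ⬝ᵥ D *ᵥ (x ∘ Sum.inr) := by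
      rw [Matrix.fromBlocks_mulVec]
      simp [dotProduct, Fintype.sum_sum_type, Function.comp]
    rw [hsplit]
    rcases (by
      by_contra hc
      push_neg at hc
      apply hx
      funext p
      rcases p with i | i
      · exact congrFun hc.1 i
      · exact congrFun hc.2 i : x ∘ Sum.inl ≠ 0 ∨ x ∘ Sum.inr ≠ 0) with h1 | h1
    · exact add_pos_of_pos_of_nonneg (hA.dotProduct_mulVec_pos h1) (hD.posSemidef.dotProduct_mulVec_nonneg _)
    · exact add_pos_of_nonneg_of_pos (hA.posSemidef.dotProduct_mulVec_nonneg _) (hD.dotProduct_mulVec_pos h1)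

theorem blocks3_diag_posDef {K1 K2 K3 : Type} [Fintype K1] [DecidableEq K1] [Fintype K2]
    [DecidableEq K2] [Fintype K3] [DecidableEq K3]
    {X : Matrix K1 K1 ℂ} {Y : Matrix K2 K2 ℂ} {Z : Matrix K3 K3 ℂ}
    (hX : X.PosDef) (hY : Y.PosDef) (hZ : Z.PosDef) :
    (blocks3 X 0 0 0 Y 0 0 0 Z).PosDef := by
  have : blocks3 X 0 0 0 Y 0 0 0 Z = Matrix.fromBlocks X 0 0 (Matrix.fromBlocks Y 0 0 Z) := by
    ext p q
    rcases p with i | i | i <;> rcases q with j | j | j <;>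
      simp [blocks3, Matrix.fromBlocks]
  rw [this]
  exact posDef_fromBlocks hX (posDef_fromBlocks hY hZ)

end Helpers

/-- Lemma 3.4: the explicit matrix `g(λ;z)` is positive definite and `f(g(λ;z))` is
block diagonal with diagonal blocks `λ·1_d`, `λ·1_m` and
`λ⁻¹ a₀a₀* + z⁻¹ + ∑ᵢ aᵢ (λ·1 − ∑ⱼ aⱼ* z aⱼ)⁻¹ aᵢ*`. -/
theorem value_reduction_upper (n d m : ℕ)
    (a₀ : Matrix (Fin d) (Fin d) ℂ) (a : Fin n → Matrix (Fin d) (Fin m) ℂ)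
    (lam : ℝ) (hlam : 0 < lam)
    (z : Matrix (Fin d) (Fin d) ℂ) (hz : z.PosDef)
    (hza : (lam • 1 - ∑ j, (a j)ᴴ * z * a j).PosDef)
    (g : Matrix (R3 d m) (R3 d m) ℂ)
    (hg : g = blocks3
      (lam⁻¹ • 1 + (lam ^ 2)⁻¹ • (a₀ᴴ * z * a₀)) 0 (lam⁻¹ • (a₀ᴴ * z))
      0 ((lam • 1 - ∑ j, (a j)ᴴ * z * a j)⁻¹) 0
      (lam⁻¹ • (z * a₀)) 0 z) :
    g.PosDef ∧
    fTilde a₀ a g = blocks3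
      (lam • 1) 0 0
      0 (lam • 1) 0
      0 0 (lam⁻¹ • (a₀ * a₀ᴴ) + z⁻¹ +
        ∑ i, a i * (lam • 1 - ∑ j, (a j)ᴴ * z * a j)⁻¹ * (a i)ᴴ) := by
  subst hg
  have hl : lam ≠ 0 := ne_of_gt hlam
  set W : Matrix (Fin m) (Fin m) ℂ := lam • 1 - ∑ j, (a j)ᴴ * z * a j with hW
  have hdz : IsUnit z.det := isUnit_iff_ne_zero.mpr hz.det_pos.ne'
  have hdw : IsUnit W.det := isUnit_iff_ne_zero.mpr hza.det_pos.ne'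
  have hz1 : z * z⁻¹ = 1 := Matrix.mul_nonsing_inv _ hdz
  have hz2 : z⁻¹ * z = 1 := Matrix.nonsing_inv_mul _ hdz
  have hw1 : W * W⁻¹ = 1 := Matrix.mul_nonsing_inv _ hdw
  have hw2 : W⁻¹ * W = 1 := Matrix.nonsing_inv_mul _ hdw
  have hz1' : ∀ {K : Type} (B : Matrix (Fin d) K ℂ), z * (z⁻¹ * B) = B := fun B => by
    rw [← Matrix.mul_assoc, hz1, Matrix.one_mul]
  have hz2' : ∀ {K : Type} (B : Matrix (Fin d) K ℂ), z⁻¹ * (z * B) = B := fun B => by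
    rw [← Matrix.mul_assoc, hz2, Matrix.one_mul]
  have hw1' : ∀ {K : Type} (B : Matrix (Fin m) K ℂ), W * (W⁻¹ * B) = B := fun B => by
    rw [← Matrix.mul_assoc, hw1, Matrix.one_mul]
  have hw2' : ∀ {K : Type} (B : Matrix (Fin m) K ℂ), W⁻¹ * (W * B) = B := fun B => by
    rw [← Matrix.mul_assoc, hw2, Matrix.one_mul]
  set G : Matrix (R3 d m) (R3 d m) ℂ := blocks3
      (lam⁻¹ • 1 + (lam ^ 2)⁻¹ • (a₀ᴴ * z * a₀)) 0 (lam⁻¹ • (a₀ᴴ * z))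
      0 W⁻¹ 0
      (lam⁻¹ • (z * a₀)) 0 z with hG
  set Gi : Matrix (R3 d m) (R3 d m) ℂ := blocks3
      (lam • 1) 0 (-a₀ᴴ)
      0 W 0
      (-a₀) 0 (lam⁻¹ • (a₀ * a₀ᴴ) + z⁻¹) with hGi
  have hGiG : Gi * G = 1 := by
    rw [hGi, hG, blocks3_mul, blocks3_one]
    apply blocks3_ext
    all_goals simp only [Matrix.mul_zero, Matrix.zero_mul, add_zero, zero_add, Matrix.mul_one,
          Matrix.one_mul, smul_mul_assoc, mul_smul_comm, smul_smul, Matrix.mul_neg,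
          Matrix.neg_mul, neg_neg, smul_neg, neg_smul, mul_add, add_mul, Matrix.mul_assoc,
          hz1, hz2, hw1, hw2, hz1', hz2', hw1', hw2']
    all_goals try rfl
    all_goals match_scalars
    all_goals try ring
    all_goals try field_simp
    all_goals try ring
  have hGGi : G * Gi = 1 := by
    rw [hGi, hG, blocks3_mul, blocks3_one]
    apply blocks3_ext
    all_goals simp only [Matrix.mul_zero, Matrix.zero_mul, add_zero, zero_add, Matrix.mul_one,
          Matrix.one_mul, smul_mul_assoc, mul_smul_comm, smul_smul, Matrix.mul_neg,
          Matrix.neg_mul, neg_neg, smul_neg, neg_smul, mul_add, add_mul, Matrix.mul_assoc,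
          hz1, hz2, hw1, hw2, hz1', hz2', hw1', hw2']
    all_goals try rfl
    all_goals match_scalars
    all_goals try ring
    all_goals try field_simp
    all_goals try ring
  have hginv : G⁻¹ = Gi := Matrix.inv_eq_left_inv hGiG
  constructor
  · -- positive definiteness
    set Nm : Matrix (R3 d m) (R3 d m) ℂ := blocks3 1 0 0 0 1 0 (lam⁻¹ • a₀) 0 1 with hNm
    set Nm' : Matrix (R3 d m) (R3 d m) ℂ := blocks3 1 0 0 0 1 0 (-(lam⁻¹ • a₀)) 0 1 with hNm'
    set D : Matrix (R3 d m) (R3 d m) ℂ := blocks3 (lam⁻¹ • 1) 0 0 0 W⁻¹ 0 0 0 z with hD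
    have hN'N : Nm' * Nm = 1 := by
      rw [hNm, hNm', blocks3_mul, blocks3_one]
      apply blocks3_ext <;> simp
    have hdecomp : G = Nmᴴ * D * Nm := by
      rw [hNm, hD, hG, blocks3_conjTranspose, blocks3_mul, blocks3_mul]
      apply blocks3_ext
      all_goals simp only [Matrix.conjTranspose_zero, Matrix.conjTranspose_one,
            Matrix.conjTranspose_smul, star_trivial, Matrix.mul_zero, Matrix.zero_mul,
            add_zero, zero_add, Matrix.mul_one, Matrix.one_mul, smul_mul_assoc,
            mul_smul_comm, smul_smul, Matrix.mul_assoc]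
      all_goals try rfl
      all_goals match_scalars
      all_goals try ring
    all_goals try field_simp
    all_goals try ring
    have hDpd : D.PosDef := by
      rw [hD]
      refine blocks3_diag_posDef ?_ (hza.inv) hz
      have h1 : (lam⁻¹ • (1 : Matrix (Fin d) (Fin d) ℂ)) =
          Matrix.diagonal (fun _ => (lam⁻¹ : ℂ)) := by
        ext i j
        by_cases hij : i = j <;> simp [Matrix.one_apply, Matrix.diagonal, hij]
      rw [h1]
      refine Matrix.PosDef.diagonal fun i => ?_
      rw [(Complex.ofReal_inv lam).symm]
      exact_mod_cast inv_pos.mpr hlam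
    rw [hdecomp]
    exact posDef_conj hDpd hN'N
  · -- value of fTilde
    have hterm : ∀ i, tA (a i) * G * tA (a i) =
        blocks3 0 0 0 0 ((a i)ᴴ * z * a i) 0 0 0 (a i * W⁻¹ * (a i)ᴴ) := by
      intro i
      rw [tA, hG, blocks3_mul, blocks3_mul]
      apply blocks3_ext <;> simp [Matrix.mul_assoc]
    rw [fTilde, hginv, tA0, hGi]
    have hsum : ∑ i, tA (a i) * G * tA (a i) =
        blocks3 0 0 0 0 (∑ i, (a i)ᴴ * z * a i) 0 0 0 (∑ i, a i * W⁻¹ * (a i)ᴴ) := by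
      simp_rw [hterm]
      rw [blocks3_sum]
      apply blocks3_ext <;> simp
    rw [hsum, blocks3_add, blocks3_add]
    apply blocks3_ext
    all_goals try (rw [hW]; abel)
    all_goals simp [add_assoc]
end
end

section
/- Assume a₀ ∈ ℂ^{d×d} is invertible. Let λ > 0 and let Z ∈ ℂ^{s×s} be Hermitian with Z > 0, Z⁻¹ − A₀ > 0, and F(Z) = λ·1. Let z ∈ ℂ^{d×d} denote the bottom-right d×d diagonal block of Z (the (3,3)-block in the decomposition ℂ^s = ℂ^d ⊕ ℂ^{2nd} ⊕ ℂ^d). Then z is positive definite with z⁻¹ > (1/λ)·a₀a₀*/(n+1); moreover Σ_{j=1}^n Nⱼ* z Nⱼ < λ·1, and z⁻¹ + Σ_{i=1}^n Mᵢ ( λ·1 − Σ_{j=1}^n Nⱼ* z Nⱼ )⁻¹ Mᵢ* ≤ λ·1. -/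
noncomputable section

open scoped ComplexOrder Matrix

/-- The index type realizing the block decomposition `ℂ^s = ℂ^d ⊕ ℂ^{2nd} ⊕ ℂ^d`. -/
abbrev S3 (n d : ℕ) : Type := Fin d ⊕ Fin (2 * n * d) ⊕ Fin d

/-- The matrix `A₀`, with `(1,3)`-block `a₀*/√(n+1)` and `(3,1)`-block `a₀/√(n+1)`. -/
def lowA0 (n : ℕ) {d : ℕ} (a₀ : Matrix (Fin d) (Fin d) ℂ) : Matrix (S3 n d) (S3 n d) ℂ :=
  blocks3 0 0 ((Real.sqrt ((n : ℝ) + 1))⁻¹ • a₀ᴴ) 0 0 0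
    ((Real.sqrt ((n : ℝ) + 1))⁻¹ • a₀) 0 0

/-- The matrix `Aᵢ`, with `(2,3)`-block `Mᵢ*` and `(3,2)`-block `Nᵢ`. -/
def lowA {n d : ℕ} (Mi Ni : Matrix (Fin d) (Fin (2 * n * d)) ℂ) :
    Matrix (S3 n d) (S3 n d) ℂ :=
  blocks3 0 0 0 0 0 Miᴴ 0 Ni 0

/-- `F(Z) = Z⁻¹ + ∑ᵢ Aᵢ* Z Aᵢ`. -/
def lowF {n d : ℕ} (M N : Fin n → Matrix (Fin d) (Fin (2 * n * d)) ℂ)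
    (Z : Matrix (S3 n d) (S3 n d) ℂ) : Matrix (S3 n d) (S3 n d) ℂ :=
  Z⁻¹ + ∑ i, (lowA (M i) (N i))ᴴ * Z * lowA (M i) (N i)

section AuxLemmas
open Matrix

variable {m p : Type} [Fintype m] [Fintype p] [DecidableEq m] [DecidableEq p]

omit [DecidableEq m] [DecidableEq p] in
lemma aux_posDef_fromBlocks_left {A : Matrix m m ℂ} {B : Matrix m p ℂ} {C : Matrix p m ℂ}
    {D : Matrix p p ℂ} (h : (fromBlocks A B C D).PosDef) : A.PosDef := by
  refine Matrix.PosDef.of_dotProduct_mulVec_pos ?_ ?_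
  · ext i j
    simpa using congrFun (congrFun h.1 (Sum.inl i)) (Sum.inl j)
  · intro x hx
    have hx' : (Sum.elim x 0 : m ⊕ p → ℂ) ≠ 0 := by
      intro hc; exact hx (by ext i; exact congrFun hc (Sum.inl i))
    have := h.dotProduct_mulVec_pos hx'
    simpa [Function.star_sumElim, fromBlocks_mulVec, sumElim_dotProduct_sumElim] using this

omit [DecidableEq m] [DecidableEq p] in
lemma aux_posDef_fromBlocks_right {A : Matrix m m ℂ} {B : Matrix m p ℂ} {C : Matrix p m ℂ}
    {D : Matrix p p ℂ} (h : (fromBlocks A B C D).PosDef) : D.PosDef := by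
  refine Matrix.PosDef.of_dotProduct_mulVec_pos ?_ ?_
  · ext i j
    simpa using congrFun (congrFun h.1 (Sum.inr i)) (Sum.inr j)
  · intro x hx
    have hx' : (Sum.elim 0 x : m ⊕ p → ℂ) ≠ 0 := by
      intro hc; exact hx (by ext i; exact congrFun hc (Sum.inr i))
    have := h.dotProduct_mulVec_pos hx'
    simpa [Function.star_sumElim, fromBlocks_mulVec, sumElim_dotProduct_sumElim] using this

omit [DecidableEq p] in
lemma aux_posDef_schur {A : Matrix m m ℂ} (B : Matrix m p ℂ) {D : Matrix p p ℂ}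
    (hA : A.PosDef) (h : (fromBlocks A B Bᴴ D).PosDef) :
    (D - Bᴴ * A⁻¹ * B).PosDef := by
  haveI := hA.isUnit.invertible
  refine Matrix.PosDef.of_dotProduct_mulVec_pos ?_ ?_
  · exact (Matrix.IsHermitian.fromBlocks₁₁ B D hA.1).mp h.1
  · intro x hx
    have hx' : (Sum.elim (-((A⁻¹ * B) *ᵥ x)) x : m ⊕ p → ℂ) ≠ 0 := by
      intro hc; exact hx (by ext i; exact congrFun hc (Sum.inr i))
    have h2 := h.dotProduct_mulVec_pos hx'
    rw [Matrix.dotProduct_mulVec, Matrix.schur_complement_eq₁₁ B D _ _ hA.1] at h2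
    rw [Matrix.dotProduct_mulVec]
    simpa using h2

omit [Fintype m] [Fintype p] [DecidableEq m] [DecidableEq p] in
lemma aux_fromBlocks_sub (A A' : Matrix m m ℂ) (B B' : Matrix m p ℂ) (C C' : Matrix p m ℂ)
    (D D' : Matrix p p ℂ) :
    fromBlocks A B C D - fromBlocks A' B' C' D' =
      fromBlocks (A - A') (B - B') (C - C') (D - D') := by
  ext (i | i) (j | j) <;> simp

omit [Fintype m] [Fintype p] [DecidableEq m] [DecidableEq p] in
lemma aux_sum_fromBlocks {ι : Type} (s : Finset ι) (A : ι → Matrix m m ℂ) (B : ι → Matrix m p ℂ)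
    (C : ι → Matrix p m ℂ) (D : ι → Matrix p p ℂ) :
    ∑ i ∈ s, fromBlocks (A i) (B i) (C i) (D i) =
      fromBlocks (∑ i ∈ s, A i) (∑ i ∈ s, B i) (∑ i ∈ s, C i) (∑ i ∈ s, D i) := by
  induction s using Finset.cons_induction with
  | empty => ext (i | i) (j | j) <;> simp
  | cons i s hi ih => rw [Finset.sum_cons, ih, Finset.sum_cons, Finset.sum_cons,
      Finset.sum_cons, Finset.sum_cons, fromBlocks_add]

omit [DecidableEq m] in
lemma aux_posSemidef_sum {ι : Type} (s : Finset ι) (f : ι → Matrix m m ℂ)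
    (h : ∀ i ∈ s, (f i).PosSemidef) : (∑ i ∈ s, f i).PosSemidef := by
  induction s using Finset.cons_induction with
  | empty => simpa using Matrix.PosSemidef.zero
  | cons i s hi ih =>
      rw [Finset.sum_cons]
      exact (h i (Finset.mem_cons_self i s)).add (ih fun j hj => h j (Finset.mem_cons_of_mem hj))

lemma aux_smul_one_inv {lam : ℝ} (hlam : lam ≠ 0) :
    (lam • (1 : Matrix m m ℂ))⁻¹ = lam⁻¹ • 1 := by
  apply Matrix.inv_eq_right_inv
  rw [Matrix.smul_mul, Matrix.mul_smul, smul_smul, mul_inv_cancel₀ hlam, one_smul, Matrix.one_mul]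

lemma aux_toBlocks₁₁_one : Matrix.toBlocks₁₁ (1 : Matrix (m ⊕ p) (m ⊕ p) ℂ) = 1 := by
  rw [← Matrix.fromBlocks_one (l := m) (m := p), Matrix.toBlocks_fromBlocks₁₁]

lemma aux_toBlocks₁₂_one : Matrix.toBlocks₁₂ (1 : Matrix (m ⊕ p) (m ⊕ p) ℂ) = 0 := by
  rw [← Matrix.fromBlocks_one (l := m) (m := p), Matrix.toBlocks_fromBlocks₁₂]

lemma aux_toBlocks₂₁_one : Matrix.toBlocks₂₁ (1 : Matrix (m ⊕ p) (m ⊕ p) ℂ) = 0 := by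
  rw [← Matrix.fromBlocks_one (l := m) (m := p), Matrix.toBlocks_fromBlocks₂₁]

lemma aux_toBlocks₂₂_one : Matrix.toBlocks₂₂ (1 : Matrix (m ⊕ p) (m ⊕ p) ℂ) = 1 := by
  rw [← Matrix.fromBlocks_one (l := m) (m := p), Matrix.toBlocks_fromBlocks₂₂]

end AuxLemmas

open Matrix in
lemma aux_lowA_eq {n d : ℕ} (Mi Ni : Matrix (Fin d) (Fin (2 * n * d)) ℂ) :
    lowA Mi Ni = fromBlocks 0 0 0 (fromBlocks 0 Miᴴ Ni 0) := by
  ext (p | p | p) (q | q | q) <;> rfl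

open Matrix in
lemma aux_lowA0_eq (n : ℕ) {d : ℕ} (a₀ : Matrix (Fin d) (Fin d) ℂ) :
    lowA0 n a₀ = fromBlocks 0
      (fromCols 0 ((Real.sqrt ((n : ℝ) + 1))⁻¹ • a₀ᴴ))
      (fromRows 0 ((Real.sqrt ((n : ℝ) + 1))⁻¹ • a₀)) 0 := by
  ext (p | p | p) (q | q | q) <;> rfl

open Matrix in
lemma aux_summand_eq {d e : ℕ} (Mi Ni : Matrix (Fin d) (Fin e) ℂ)
    (a : Matrix (Fin d) (Fin d) ℂ) (b : Matrix (Fin d) (Fin e ⊕ Fin d) ℂ)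
    (c : Matrix (Fin e ⊕ Fin d) (Fin d) ℂ)
    (P : Matrix (Fin e) (Fin e) ℂ) (Q : Matrix (Fin e) (Fin d) ℂ)
    (R : Matrix (Fin d) (Fin e) ℂ) (zz : Matrix (Fin d) (Fin d) ℂ) :
    (fromBlocks 0 0 0 (fromBlocks 0 Miᴴ Ni 0))ᴴ *
        fromBlocks a b c (fromBlocks P Q R zz) *
        fromBlocks 0 0 0 (fromBlocks 0 Miᴴ Ni 0) =
      fromBlocks 0 0 0 (fromBlocks
        (Niᴴ * zz * Ni) (Niᴴ * R * Miᴴ) (Mi * Q * Ni) (Mi * P * Miᴴ)) := by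
  simp only [fromBlocks_conjTranspose, conjTranspose_zero, conjTranspose_conjTranspose,
    fromBlocks_multiply, Matrix.zero_mul, Matrix.mul_zero, add_zero, zero_add,
    Matrix.mul_assoc]

/-- Lemma 4.2: consequences of the identity `F(Z) = λ·1` for the bottom-right block `z` of
an admissible `Z`. -/
theorem schur_reduction_lower (n d : ℕ)
    (a₀ : Matrix (Fin d) (Fin d) ℂ) (ha₀ : IsUnit a₀)
    (M N : Fin n → Matrix (Fin d) (Fin (2 * n * d)) ℂ)
    (lam : ℝ) (hlam : 0 < lam)
    (Z : Matrix (S3 n d) (S3 n d) ℂ) (hZ : Z.PosDef)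
    (hZA : (Z⁻¹ - lowA0 n a₀).PosDef)
    (hF : lowF M N Z = lam • 1)
    (z : Matrix (Fin d) (Fin d) ℂ)
    (hz : z = Z.submatrix (Sum.inr ∘ Sum.inr) (Sum.inr ∘ Sum.inr)) :
    z.PosDef ∧
    (z⁻¹ - (lam⁻¹ * ((n : ℝ) + 1)⁻¹) • (a₀ * a₀ᴴ)).PosDef ∧
    (lam • 1 - ∑ j, (N j)ᴴ * z * N j).PosDef ∧
    (lam • 1 - (z⁻¹ +
      ∑ i, M i * (lam • 1 - ∑ j, (N j)ᴴ * z * N j)⁻¹ * (M i)ᴴ)).PosSemidef := by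
  classical
  open Matrix in
  set P := Z.toBlocks₂₂.toBlocks₁₁ with hPdef
  set Q := Z.toBlocks₂₂.toBlocks₁₂ with hQdef
  set R := Z.toBlocks₂₂.toBlocks₂₁ with hRdef
  have hzz : Z.toBlocks₂₂.toBlocks₂₂ = z := by rw [hz]; ext i j; rfl
  have hZr : Z.toBlocks₂₂ = fromBlocks P Q R z := by
    rw [← hzz, hPdef, hQdef, hRdef, fromBlocks_toBlocks]
  have hZdec : Z = fromBlocks Z.toBlocks₁₁ Z.toBlocks₁₂ Z.toBlocks₂₁ (fromBlocks P Q R z) := by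
    rw [← hZr, fromBlocks_toBlocks]
  set S1 := ∑ j, (N j)ᴴ * z * N j with hS1def
  set T := ∑ i, (N i)ᴴ * R * (M i)ᴴ with hTdef
  set U := ∑ i, M i * Q * N i with hUdef
  set S4 := ∑ i, M i * P * (M i)ᴴ with hS4def
  have hsum : ∑ i, (lowA (M i) (N i))ᴴ * Z * lowA (M i) (N i) =
      fromBlocks 0 0 0 (fromBlocks S1 T U S4) := by
    have hterm : ∀ i, (lowA (M i) (N i))ᴴ * Z * lowA (M i) (N i) =
        fromBlocks (0 : Matrix (Fin d) (Fin d) ℂ) 0 0 (fromBlocks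
          ((N i)ᴴ * z * N i) ((N i)ᴴ * R * (M i)ᴴ) (M i * Q * N i) (M i * P * (M i)ᴴ)) := by
      intro i
      rw [aux_lowA_eq]
      rw [hZdec]
      exact aux_summand_eq (M i) (N i) _ _ _ _ _ _ _
    simp_rw [hterm]
    rw [aux_sum_fromBlocks, aux_sum_fromBlocks]
    simp only [Finset.sum_const_zero, ← hS1def, ← hTdef, ← hUdef, ← hS4def]
  have hW : Z⁻¹ = fromBlocks (lam • 1) 0 0
      (fromBlocks (lam • 1 - S1) (-T) (-U) (lam • 1 - S4)) := by
    have h1 : Z⁻¹ = lam • (1 : Matrix (S3 n d) (S3 n d) ℂ) -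
        fromBlocks 0 0 0 (fromBlocks S1 T U S4) := by
      rw [← hsum]; exact eq_sub_of_add_eq hF
    have hone : (lam • (1 : Matrix (S3 n d) (S3 n d) ℂ)) =
        fromBlocks (lam • 1) 0 0 (fromBlocks (lam • 1) 0 0 (lam • 1)) := by
      rw [← Matrix.fromBlocks_one, ← Matrix.fromBlocks_one (l := Fin (2*n*d)) (m := Fin d),
        fromBlocks_smul, fromBlocks_smul]
      simp
    rw [h1, hone, aux_fromBlocks_sub, aux_fromBlocks_sub]
    simp
  have hWpd' : (fromBlocks (lam • 1) 0 0
      (fromBlocks (lam • 1 - S1) (-T) (-U) (lam • 1 - S4))).PosDef := hW ▸ hZ.inv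
  have hlam1 : ((lam • 1 : Matrix (Fin d) (Fin d) ℂ)).PosDef := aux_posDef_fromBlocks_left hWpd'
  have hWr : (fromBlocks (lam • 1 - S1) (-T) (-U) (lam • 1 - S4)).PosDef :=
    aux_posDef_fromBlocks_right hWpd'
  have hW22 : (lam • 1 - S1).PosDef := aux_posDef_fromBlocks_left hWr
  have hzpd : z.PosDef :=
    aux_posDef_fromBlocks_right (aux_posDef_fromBlocks_right (hZdec ▸ hZ))
  have hQR : Q = Rᴴ := by
    ext i j
    have h := congrFun (congrFun hZ.1 (Sum.inr (Sum.inl i))) (Sum.inr (Sum.inr j))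
    simpa [hQdef, hRdef, Matrix.toBlocks₁₂, Matrix.toBlocks₂₁, Matrix.toBlocks₂₂]
      using h.symm
  have hUT : U = Tᴴ := by
    rw [hUdef, hTdef, hQR, Matrix.conjTranspose_sum]
    simp [Matrix.conjTranspose_mul, Matrix.mul_assoc]
  haveI := hZ.isUnit.invertible
  have hmul1 : (fromBlocks (lam • 1 - S1) (-T) (-U) (lam • 1 - S4)) *
      (fromBlocks P Q R z) = 1 := by
    have h := Matrix.inv_mul_of_invertible Z
    rw [hW] at h
    rw [hZdec, fromBlocks_multiply] at h
    have h2 := congrArg Matrix.toBlocks₂₂ h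
    simpa [aux_toBlocks₂₂_one] using h2
  have hmul2 : (fromBlocks P Q R z) *
      (fromBlocks (lam • 1 - S1) (-T) (-U) (lam • 1 - S4)) = 1 := by
    have h := Matrix.mul_inv_of_invertible Z
    rw [hW] at h
    rw [hZdec, fromBlocks_multiply] at h
    have h2 := congrArg Matrix.toBlocks₂₂ h
    simpa [aux_toBlocks₂₂_one] using h2
  rw [fromBlocks_multiply] at hmul1 hmul2
  have e1 := congrArg Matrix.toBlocks₁₁ hmul1
  have f3 := congrArg Matrix.toBlocks₂₁ hmul2
  have f4 := congrArg Matrix.toBlocks₂₂ hmul2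
  simp only [Matrix.toBlocks_fromBlocks₁₁, Matrix.toBlocks_fromBlocks₁₂,
    Matrix.toBlocks_fromBlocks₂₁, Matrix.toBlocks_fromBlocks₂₂,
    aux_toBlocks₁₁_one, aux_toBlocks₁₂_one, aux_toBlocks₂₁_one, aux_toBlocks₂₂_one]
    at e1 f3 f4
  haveI := hW22.isUnit.invertible
  have hRe : R = z * U * (lam • 1 - S1)⁻¹ := by
    have h' : R * (lam • 1 - S1) = z * U := by
      rw [Matrix.mul_neg] at f3
      exact add_neg_eq_zero.mp f3
    calc R = R * (lam • 1 - S1) * (lam • 1 - S1)⁻¹ := by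
          rw [Matrix.mul_inv_cancel_right_of_invertible]
      _ = z * U * (lam • 1 - S1)⁻¹ := by rw [h']
  have hSz : z * ((lam • 1 - S4) - U * (lam • 1 - S1)⁻¹ * T) = 1 := by
    rw [hRe] at f4
    have hexp : z * ((lam • 1 - S4) - U * (lam • 1 - S1)⁻¹ * T) =
        z * U * (lam • 1 - S1)⁻¹ * -T + z * (lam • 1 - S4) := by
      simp only [Matrix.mul_sub, Matrix.mul_neg, Matrix.neg_mul, Matrix.mul_assoc]
      abel
    exact hexp.trans f4
  have hzinv : z⁻¹ = (lam • 1 - S4) - U * (lam • 1 - S1)⁻¹ * T :=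
    Matrix.inv_eq_right_inv hSz
  have hPe : P = (lam • 1 - S1)⁻¹ +
      (lam • 1 - S1)⁻¹ * T * z * (U * (lam • 1 - S1)⁻¹) := by
    have h' : (lam • 1 - S1) * P = 1 + T * (z * U * (lam • 1 - S1)⁻¹) := by
      rw [hRe, Matrix.neg_mul, ← sub_eq_add_neg] at e1
      exact sub_eq_iff_eq_add.mp e1
    calc P = (lam • 1 - S1)⁻¹ * ((lam • 1 - S1) * P) := by
          rw [Matrix.inv_mul_cancel_left_of_invertible]
      _ = _ := by
          rw [h', Matrix.mul_add, Matrix.mul_one]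
          simp [Matrix.mul_assoc]
  have hAinvT : (lam • 1 - S1)⁻¹ * T = (U * (lam • 1 - S1)⁻¹)ᴴ := by
    rw [Matrix.conjTranspose_mul, hW22.1.inv.eq, hUT, conjTranspose_conjTranspose]
  -- Claim 2
  have claim2 : (z⁻¹ - (lam⁻¹ * ((n : ℝ) + 1)⁻¹) • (a₀ * a₀ᴴ)).PosDef := by
    set κ : ℝ := (Real.sqrt ((n : ℝ) + 1))⁻¹ with hκdef
    set B₀ : Matrix (Fin d) (Fin (2*n*d) ⊕ Fin d) ℂ :=
      fromCols 0 (-(κ • a₀ᴴ)) with hB₀def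
    have hB₀H : B₀ᴴ = fromRows 0 (-(κ • a₀)) := by
      rw [hB₀def, conjTranspose_fromCols_eq_fromRows_conjTranspose]
      simp
    have hWA : Z⁻¹ - lowA0 n a₀ = fromBlocks (lam • 1) B₀ B₀ᴴ
        (fromBlocks (lam • 1 - S1) (-T) (-U) (lam • 1 - S4)) := by
      rw [hW, aux_lowA0_eq, aux_fromBlocks_sub, hB₀H, hB₀def]
      rw [sub_zero, sub_zero, zero_sub, zero_sub, fromCols_neg, fromRows_neg]
      simp [hκdef]
    have h2 := aux_posDef_schur B₀ hlam1 (hWA ▸ hZA)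
    have hκκ : κ * κ = ((n : ℝ) + 1)⁻¹ := by
      rw [hκdef, ← mul_inv, Real.mul_self_sqrt (by positivity)]
    have hBB : B₀ᴴ * (lam • (1 : Matrix (Fin d) (Fin d) ℂ))⁻¹ * B₀ =
        fromBlocks 0 0 0 ((lam⁻¹ * ((n : ℝ) + 1)⁻¹) • (a₀ * a₀ᴴ)) := by
      rw [aux_smul_one_inv hlam.ne', hB₀H, hB₀def, Matrix.mul_smul, Matrix.mul_one,
        Matrix.smul_mul, fromRows_mul_fromCols]
      simp only [Matrix.mul_zero, Matrix.zero_mul, Matrix.neg_mul, Matrix.mul_neg, neg_neg,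
        Matrix.smul_mul, Matrix.mul_smul, smul_smul, fromBlocks_smul, smul_zero]
      simp only [smul_neg, neg_neg, neg_zero, smul_zero, smul_smul, mul_assoc, hκκ]
    rw [hBB] at h2
    rw [aux_fromBlocks_sub] at h2
    have hneg : -U = (-T)ᴴ := by rw [conjTranspose_neg, hUT]
    rw [sub_zero, sub_zero, sub_zero, hneg] at h2
    have h3 := aux_posDef_schur (-T) hW22 h2
    have heq : ((lam • 1 - S4) - (lam⁻¹ * ((n : ℝ) + 1)⁻¹) • (a₀ * a₀ᴴ)) -
        (-T)ᴴ * (lam • 1 - S1)⁻¹ * (-T) =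
        z⁻¹ - (lam⁻¹ * ((n : ℝ) + 1)⁻¹) • (a₀ * a₀ᴴ) := by
      rw [hzinv, hUT]
      simp only [conjTranspose_neg, Matrix.neg_mul, Matrix.mul_neg, neg_neg]
      abel
    rwa [heq] at h3
  -- Claim 4
  have hXpsd : ((U * (lam • 1 - S1)⁻¹)ᴴ * z * (U * (lam • 1 - S1)⁻¹)).PosSemidef :=
    hzpd.posSemidef.conjTranspose_mul_mul_same _
  have key : lam • 1 - (z⁻¹ + ∑ i, M i * (lam • 1 - S1)⁻¹ * (M i)ᴴ) =
      (∑ i, M i * ((U * (lam • 1 - S1)⁻¹)ᴴ * z * (U * (lam • 1 - S1)⁻¹)) * (M i)ᴴ) +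
        Tᴴ * (lam • 1 - S1)⁻¹ * T := by
    have hS4' : S4 = (∑ i, M i * (lam • 1 - S1)⁻¹ * (M i)ᴴ) +
        ∑ i, M i * ((U * (lam • 1 - S1)⁻¹)ᴴ * z * (U * (lam • 1 - S1)⁻¹)) * (M i)ᴴ := by
      rw [hS4def]
      have : ∀ i : Fin n, M i * P * (M i)ᴴ = M i * (lam • 1 - S1)⁻¹ * (M i)ᴴ +
          M i * ((U * (lam • 1 - S1)⁻¹)ᴴ * z * (U * (lam • 1 - S1)⁻¹)) * (M i)ᴴ := by
        intro i
        rw [hPe, hAinvT]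
        simp only [Matrix.mul_add, Matrix.add_mul, Matrix.mul_assoc]
      simp_rw [this]
      rw [Finset.sum_add_distrib]
    have hUAT : U * (lam • 1 - S1)⁻¹ * T = Tᴴ * (lam • 1 - S1)⁻¹ * T := by rw [hUT]
    rw [hzinv, hUAT, hS4']
    abel
  have claim4 : (lam • 1 - (z⁻¹ +
      ∑ i, M i * (lam • 1 - S1)⁻¹ * (M i)ᴴ)).PosSemidef := by
    rw [key]
    exact (aux_posSemidef_sum _ _
      (fun i _ => hXpsd.mul_mul_conjTranspose_same (M i))).add
      ((hW22.inv.posSemidef).conjTranspose_mul_mul_same T)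
  exact ⟨hzpd, claim2, hW22, claim4⟩
end
end

section
/- Let λ > 0 and let z ∈ ℂ^{d×d} be Hermitian and invertible with z⁻¹ > (1/λ)·a₀a₀*/(n+1) and Σ_{j=1}^n Nⱼ* z Nⱼ < λ·1. Define G(λ;z) ∈ ℂ^{s×s} as the block-diagonal matrix with diagonal blocks λ⁻¹·1_d, (λ·1 − Σ_{j=1}^n Nⱼ* z Nⱼ)⁻¹, and z. Then G(λ;z) > 0, G(λ;z)⁻¹ − A₀ > 0, and F(G(λ;z)) is the block-diagonal matrix with diagonal blocks λ·1_d, λ·1_{2nd}, and z⁻¹ + Σ_{i=1}^n Mᵢ ( λ·1 − Σ_{j=1}^n Nⱼ* z Nⱼ )⁻¹ Mᵢ*. -/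
noncomputable section

open scoped ComplexOrder Matrix

private lemma posSemidef_rsmul {k : Type} [Fintype k] {c : ℝ} (hc : 0 ≤ c)
    {X : Matrix k k ℂ} (hX : X.PosSemidef) : (c • X).PosSemidef := by
  refine Matrix.PosSemidef.of_dotProduct_mulVec_nonneg (by rw [Matrix.IsHermitian, Matrix.conjTranspose_smul, star_trivial, hX.1.eq]) fun x => ?_
  rw [Matrix.smul_mulVec, dotProduct_smul]
  have h := hX.dotProduct_mulVec_nonneg x
  rw [show (c • (dotProduct (star x) (X *ᵥ x))) = (c : ℂ) * (dotProduct (star x) (X *ᵥ x)) from by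
    rw [Complex.real_smul]]
  exact mul_nonneg (by exact_mod_cast Complex.zero_le_real.mpr hc) h

private lemma posDef_rsmul {k : Type} [Fintype k] {c : ℝ} (hc : 0 < c)
    {X : Matrix k k ℂ} (hX : X.PosDef) : (c • X).PosDef := by
  refine Matrix.PosDef.of_dotProduct_mulVec_pos (by rw [Matrix.IsHermitian, Matrix.conjTranspose_smul, star_trivial, hX.1.eq]) fun x hx => ?_
  rw [Matrix.smul_mulVec, dotProduct_smul]
  have h := hX.dotProduct_mulVec_pos hx
  rw [show (c • (dotProduct (star x) (X *ᵥ x))) = (c : ℂ) * (dotProduct (star x) (X *ᵥ x)) from by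
    rw [Complex.real_smul]]
  exact mul_pos (by exact_mod_cast Complex.zero_lt_real.mpr hc) h

private lemma posDef_fromBlocks_diag {m k : Type} [Fintype m] [Fintype k] [DecidableEq m] [DecidableEq k]
    {A : Matrix m m ℂ} {D : Matrix k k ℂ} (hA : A.PosDef) (hD : D.PosDef) :
    (Matrix.fromBlocks A 0 0 D).PosDef := by
  refine Matrix.PosDef.of_dotProduct_mulVec_pos ?_ ?_
  · rw [Matrix.IsHermitian, Matrix.fromBlocks_conjTranspose]
    simp [hA.1.eq, hD.1.eq]
  · intro x hx
    rw [← Sum.elim_comp_inl_inr x, Matrix.fromBlocks_mulVec, Function.star_sumElim,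
      sumElim_dotProduct_sumElim]
    simp only [Matrix.zero_mulVec, add_zero, zero_add]
    rcases em (x ∘ Sum.inl = 0) with h1 | h1
    · have h2 : x ∘ Sum.inr ≠ 0 := by
        intro h2
        apply hx
        have := Sum.elim_comp_inl_inr x
        rw [h1, h2] at this
        rw [← this]
        ext (i | i) <;> rfl
      exact add_pos_of_nonneg_of_pos (hA.posSemidef.dotProduct_mulVec_nonneg _) (hD.dotProduct_mulVec_pos h2)
    · exact add_pos_of_pos_of_nonneg (hA.dotProduct_mulVec_pos h1) (hD.posSemidef.dotProduct_mulVec_nonneg _)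

private lemma posDef_conj_s3 {k : Type} [Fintype k] [DecidableEq k]
    {X U : Matrix k k ℂ} (hX : X.PosDef) (hU : IsUnit U) : (Uᴴ * X * U).PosDef := by
  refine Matrix.PosDef.of_dotProduct_mulVec_pos (Matrix.isHermitian_conjTranspose_mul_mul U hX.1) fun x hx => ?_
  have hUx : U *ᵥ x ≠ 0 := by
    intro h
    apply hx
    have := congrArg (fun v => U⁻¹ *ᵥ v) h
    simpa [Matrix.mulVec_mulVec,
      Matrix.nonsing_inv_mul _ ((Matrix.isUnit_iff_isUnit_det U).mp hU)] using this
  have h := hX.dotProduct_mulVec_pos hUx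
  rw [Matrix.mul_assoc, ← Matrix.mulVec_mulVec, Matrix.dotProduct_mulVec,
    ← Matrix.star_mulVec, ← Matrix.mulVec_mulVec]
  exact h

private lemma posDef_fromBlocks₁₁' {m k : Type} [Fintype m] [Fintype k] [DecidableEq m] [DecidableEq k]
    {A : Matrix m m ℂ} (B : Matrix m k ℂ) {D : Matrix k k ℂ}
    (hA : A.PosDef) (hS : (D - Bᴴ * A⁻¹ * B).PosDef) :
    (Matrix.fromBlocks A B Bᴴ D).PosDef := by
  haveI : Invertible A := A.invertibleOfIsUnitDet ((Matrix.isUnit_iff_isUnit_det A).mp hA.isUnit)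
  have hAinv : ⅟A = A⁻¹ := Matrix.invOf_eq_nonsing_inv A
  have hU : (Matrix.fromBlocks (1 : Matrix m m ℂ) (⅟A * B) (0 : Matrix k m ℂ) (1 : Matrix k k ℂ))ᴴ
      = Matrix.fromBlocks 1 0 (Bᴴ * ⅟A) 1 := by
    rw [Matrix.fromBlocks_conjTranspose, Matrix.conjTranspose_mul, hAinv,
      Matrix.conjTranspose_nonsing_inv, hA.1.eq]
    simp
  have hLDU := Matrix.fromBlocks_eq_of_invertible₁₁ A B Bᴴ D
  rw [← hU] at hLDU
  rw [hLDU]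
  haveI : Invertible (1 : Matrix m m ℂ) := invertibleOne
  haveI : Invertible (1 : Matrix k k ℂ) := invertibleOne
  haveI := Matrix.fromBlocksZero₂₁Invertible (1 : Matrix m m ℂ) (⅟A * B) (1 : Matrix k k ℂ)
  refine posDef_conj_s3 (posDef_fromBlocks_diag hA ?_) (isUnit_of_invertible _)
  rwa [hAinv]

private lemma fromBlocks_sum {ι m k l o : Type} [Fintype ι] 
    (A : ι → Matrix m l ℂ) (B : ι → Matrix m o ℂ) (C : ι → Matrix k l ℂ) (D : ι → Matrix k o ℂ) :
    ∑ i, Matrix.fromBlocks (A i) (B i) (C i) (D i) =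
      Matrix.fromBlocks (∑ i, A i) (∑ i, B i) (∑ i, C i) (∑ i, D i) := by
  ext (i | i) (j | j) <;> simp [Matrix.fromBlocks, Matrix.sum_apply]

private lemma blocks3_eq {K1 K2 K3 : Type}
    (X11 : Matrix K1 K1 ℂ) (X12 : Matrix K1 K2 ℂ) (X13 : Matrix K1 K3 ℂ)
    (X21 : Matrix K2 K1 ℂ) (X22 : Matrix K2 K2 ℂ) (X23 : Matrix K2 K3 ℂ)
    (X31 : Matrix K3 K1 ℂ) (X32 : Matrix K3 K2 ℂ) (X33 : Matrix K3 K3 ℂ) :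
    blocks3 X11 X12 X13 X21 X22 X23 X31 X32 X33 =
      Matrix.fromBlocks X11 (Matrix.fromCols X12 X13) (Matrix.fromRows X21 X31)
        (Matrix.fromBlocks X22 X23 X32 X33) := by
  ext (i | j | k) (i' | j' | k') <;> rfl

/-- Lemma 4.3: the explicit block-diagonal matrix `G(λ;z)` is positive definite, satisfies
`G(λ;z)⁻¹ − A₀ > 0`, and `F(G(λ;z))` is block diagonal with diagonal blocks `λ·1_d`,
`λ·1_{2nd}` and `z⁻¹ + ∑ᵢ Mᵢ (λ·1 − ∑ⱼ Nⱼ* z Nⱼ)⁻¹ Mᵢ*`. -/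
theorem value_reduction_lower (n d : ℕ)
    (a₀ : Matrix (Fin d) (Fin d) ℂ)
    (M N : Fin n → Matrix (Fin d) (Fin (2 * n * d)) ℂ)
    (lam : ℝ) (hlam : 0 < lam)
    (z : Matrix (Fin d) (Fin d) ℂ) (hz : z.IsHermitian) (hzu : IsUnit z)
    (hza : (z⁻¹ - (lam⁻¹ * ((n : ℝ) + 1)⁻¹) • (a₀ * a₀ᴴ)).PosDef)
    (hzN : (lam • 1 - ∑ j, (N j)ᴴ * z * N j).PosDef)
    (G : Matrix (S3 n d) (S3 n d) ℂ)
    (hG : G = blocks3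
      (lam⁻¹ • 1) 0 0
      0 ((lam • 1 - ∑ j, (N j)ᴴ * z * N j)⁻¹) 0
      0 0 z) :
    G.PosDef ∧
    (G⁻¹ - lowA0 n a₀).PosDef ∧
    lowF M N G = blocks3
      (lam • 1) 0 0
      0 (lam • 1) 0
      0 0 (z⁻¹ + ∑ i, M i * (lam • 1 - ∑ j, (N j)ᴴ * z * N j)⁻¹ * (M i)ᴴ) := by
  have hlamC : (lam : ℂ) ≠ 0 := by exact_mod_cast hlam.ne'
  have hzdet : IsUnit z.det := (Matrix.isUnit_iff_isUnit_det z).mp hzu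
  set W : Matrix (Fin (2 * n * d)) (Fin (2 * n * d)) ℂ :=
    lam • 1 - ∑ j, (N j)ᴴ * z * N j with hWdef
  have hWdet : IsUnit W.det := (Matrix.isUnit_iff_isUnit_det W).mp hzN.isUnit
  -- z⁻¹ and z are positive definite
  have hcnn : (0 : ℝ) ≤ lam⁻¹ * ((n : ℝ) + 1)⁻¹ := by positivity
  have hzinv : (z⁻¹).PosDef := by
    have h := hza.add_posSemidef
      (posSemidef_rsmul hcnn (Matrix.posSemidef_self_mul_conjTranspose a₀))
    rwa [sub_add_cancel] at h
  have hzpos : z.PosDef := by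
    have h := hzinv.inv
    rwa [Matrix.nonsing_inv_nonsing_inv z hzdet] at h
  -- block forms
  have hGb : G = Matrix.fromBlocks (lam⁻¹ • 1) 0 0 (Matrix.fromBlocks W⁻¹ 0 0 z) := by
    rw [hG, blocks3_eq]
    rw [Matrix.fromCols_zero, Matrix.fromRows_zero]
  have h11 : (lam⁻¹ • (1 : Matrix (Fin d) (Fin d) ℂ)) * (lam • 1) = 1 := by
    rw [smul_mul_assoc, mul_smul_comm, smul_smul, inv_mul_cancel₀ hlam.ne', one_smul, one_mul]
  have hGinv : G⁻¹ = Matrix.fromBlocks (lam • 1) 0 0 (Matrix.fromBlocks W 0 0 z⁻¹) := by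
    apply Matrix.inv_eq_right_inv
    rw [hGb]
    rw [Matrix.fromBlocks_multiply, Matrix.fromBlocks_multiply]
    simp only [Matrix.mul_zero, Matrix.zero_mul, add_zero, zero_add, h11,
      Matrix.nonsing_inv_mul W hWdet, Matrix.mul_nonsing_inv z hzdet,
      Matrix.fromBlocks_one]
  have hGpos : G.PosDef := by
    rw [hGb]
    exact posDef_fromBlocks_diag (posDef_rsmul (inv_pos.mpr hlam) Matrix.PosDef.one)
      (posDef_fromBlocks_diag hzN.inv hzpos)
  refine ⟨hGpos, ?_, ?_⟩
  · -- G⁻¹ - A₀ positive definite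
    set c : ℝ := (Real.sqrt ((n : ℝ) + 1))⁻¹ with hcdef
    have hc2 : c * c = ((n : ℝ) + 1)⁻¹ := by
      rw [hcdef, ← mul_inv]
      rw [Real.mul_self_sqrt (by positivity)]
    have hA0 : lowA0 n a₀ = Matrix.fromBlocks 0 (Matrix.fromCols 0 (c • a₀ᴴ))
        (Matrix.fromRows 0 (c • a₀)) 0 := by
      rw [lowA0, blocks3_eq, Matrix.fromBlocks_zero]
    have hBH : (-(Matrix.fromCols (0 : Matrix (Fin d) (Fin (2 * n * d)) ℂ) (c • a₀ᴴ)))ᴴ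
        = -(Matrix.fromRows 0 (c • a₀)) := by
      rw [Matrix.conjTranspose_neg, Matrix.conjTranspose_fromCols_eq_fromRows_conjTranspose,
        Matrix.conjTranspose_zero, Matrix.conjTranspose_smul, star_trivial,
        Matrix.conjTranspose_conjTranspose]
    have hdiff : G⁻¹ - lowA0 n a₀ =
        Matrix.fromBlocks (lam • 1) (-(Matrix.fromCols 0 (c • a₀ᴴ)))
          ((-(Matrix.fromCols 0 (c • a₀ᴴ)))ᴴ) (Matrix.fromBlocks W 0 0 z⁻¹) := by
      rw [hGinv, hA0, hBH, sub_eq_add_neg, Matrix.fromBlocks_neg, Matrix.fromBlocks_add]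
      simp
    rw [hdiff]
    apply posDef_fromBlocks₁₁'
    · exact posDef_rsmul hlam Matrix.PosDef.one
    · have hAinv : ((lam • 1 : Matrix (Fin d) (Fin d) ℂ))⁻¹ = lam⁻¹ • 1 := by
        apply Matrix.inv_eq_right_inv
        rw [smul_mul_assoc, mul_smul_comm, smul_smul, mul_inv_cancel₀ hlam.ne', one_smul, one_mul]
      have hprod : (Matrix.fromRows (0 : Matrix (Fin (2 * n * d)) (Fin d) ℂ) (c • a₀)) *
          (Matrix.fromCols (0 : Matrix (Fin d) (Fin (2 * n * d)) ℂ) (c • a₀ᴴ)) =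
          Matrix.fromBlocks 0 0 0 ((c * c) • (a₀ * a₀ᴴ)) := by
        rw [Matrix.fromRows_mul, Matrix.mul_fromCols, Matrix.mul_fromCols,
          Matrix.zero_mul, Matrix.zero_mul, Matrix.mul_zero,
          show (Matrix.fromCols (0 : Matrix (Fin (2 * n * d)) (Fin (2 * n * d)) ℂ)
            (0 : Matrix (Fin (2 * n * d)) (Fin d) ℂ)) = 0 from Matrix.fromCols_zero,
          show (0 : Matrix (Fin (2 * n * d)) (Fin (2 * n * d) ⊕ Fin d) ℂ)
            = Matrix.fromCols 0 0 from Matrix.fromCols_zero.symm,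
          Matrix.fromRows_fromCols_eq_fromBlocks, smul_mul_assoc, mul_smul_comm, smul_smul]
      have hBAB : ((-(Matrix.fromCols (0 : Matrix (Fin d) (Fin (2 * n * d)) ℂ) (c • a₀ᴴ)))ᴴ) *
          ((lam • 1 : Matrix (Fin d) (Fin d) ℂ))⁻¹ *
          (-(Matrix.fromCols (0 : Matrix (Fin d) (Fin (2 * n * d)) ℂ) (c • a₀ᴴ))) =
          Matrix.fromBlocks 0 0 0 ((lam⁻¹ * ((n : ℝ) + 1)⁻¹) • (a₀ * a₀ᴴ)) := by
        rw [hBH, hAinv]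
        simp only [Matrix.neg_mul, Matrix.mul_neg, neg_neg]
        rw [Matrix.mul_smul, Matrix.mul_one, Matrix.smul_mul, hprod, Matrix.fromBlocks_smul,
          smul_zero, smul_smul, hc2]
        simp
      rw [hBAB]
      rw [show (Matrix.fromBlocks W 0 0 z⁻¹)
          - Matrix.fromBlocks 0 0 0 ((lam⁻¹ * ((n : ℝ) + 1)⁻¹) • (a₀ * a₀ᴴ))
          = Matrix.fromBlocks W 0 0 (z⁻¹ - (lam⁻¹ * ((n : ℝ) + 1)⁻¹) • (a₀ * a₀ᴴ)) from by
        rw [sub_eq_add_neg, Matrix.fromBlocks_neg, Matrix.fromBlocks_add]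
        simp [sub_eq_add_neg]]
      exact posDef_fromBlocks_diag hzN hza
  · -- the formula for F(G)
    have hAi : ∀ i, lowA (M i) (N i) =
        Matrix.fromBlocks 0 0 0 (Matrix.fromBlocks 0 (M i)ᴴ (N i) 0) := by
      intro i
      rw [lowA, blocks3_eq, Matrix.fromCols_zero, Matrix.fromRows_zero]
    have hterm : ∀ i, (lowA (M i) (N i))ᴴ * G * lowA (M i) (N i) =
        Matrix.fromBlocks 0 0 0
          (Matrix.fromBlocks ((N i)ᴴ * z * N i) 0 0 (M i * W⁻¹ * (M i)ᴴ)) := by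
      intro i
      rw [hAi, hGb]
      simp [Matrix.fromBlocks_conjTranspose, Matrix.fromBlocks_multiply, Matrix.mul_assoc]
    rw [lowF]
    rw [Finset.sum_congr rfl (fun i _ => hterm i), hGinv]
    rw [fromBlocks_sum, fromBlocks_sum]
    rw [Matrix.fromBlocks_add, Matrix.fromBlocks_add, blocks3_eq,
      Matrix.fromCols_zero, Matrix.fromRows_zero]
    simp only [Finset.sum_const_zero, add_zero, zero_add, Matrix.fromBlocks_zero]
    congr 1
    rw [hWdef]
    rw [sub_add_cancel]
end
end

section
/- Let n,d,m ≥ 1, a₀ ∈ ℂ^{d×d}, a₁,…,aₙ ∈ ℂ^{d×m}, and assume M₁,…,Mₙ,N₁,…,Nₙ ∈ ℂ^{d×2nd} satisfy MᵢMⱼ* = NᵢNⱼ* = δ_{ij}·a₀a₀*/(n+1) − aᵢaⱼ* and MᵢNⱼ* = −aᵢaⱼ* for all i,j ∈ {1,…,n}. Let z ∈ ℂ^{d×d} be Hermitian and invertible with z⁻¹ > a₀a₀*/(n+1). Then Σ_{j=1}^n Nⱼ* z Nⱼ < 1, and Σ_{i=1}^n Mᵢ ( 1 − Σ_{j=1}^n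 Nⱼ* z Nⱼ )⁻¹ Mᵢ* = (n/(n+1))·a₀a₀* − Σ_{i=1}^n aᵢ ( 1 + Σ_{j=1}^n aⱼ* ( z⁻¹ − a₀a₀*/(n+1) )⁻¹ aⱼ )⁻¹ aᵢ*. -/
set_option maxHeartbeats 1000000

noncomputable section

open scoped ComplexOrder Matrix

private lemma sum_mulVec' {k l : ℕ} {ι : Type*} [Fintype ι]
    (A : ι → Matrix (Fin k) (Fin l) ℂ) (x : Fin l → ℂ) :
    (∑ j, A j) *ᵥ x = ∑ j, A j *ᵥ x := by
  ext i
  simp only [Matrix.mulVec, dotProduct, Finset.sum_apply, Matrix.sum_apply,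
    Finset.sum_mul]
  rw [Finset.sum_comm]

private lemma dot_sum_right {k : ℕ} {ι : Type*} [Fintype ι]
    (v : Fin k → ℂ) (w : ι → Fin k → ℂ) :
    v ⬝ᵥ (∑ j, w j) = ∑ j, v ⬝ᵥ w j := by
  simp only [dotProduct, Finset.sum_apply, Finset.mul_sum]
  rw [Finset.sum_comm]

private lemma inner_piLp_equiv_symm' {k : ℕ} (x y : Fin k → ℂ) :
    inner ℂ ((WithLp.equiv 2 (Fin k → ℂ)).symm x) ((WithLp.equiv 2 (Fin k → ℂ)).symm y)
      = star x ⬝ᵥ y := by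
  rw [dotProduct_comm]; rfl

private lemma dot_cs {k : ℕ} (x w : Fin k → ℂ) :
    ‖star x ⬝ᵥ w‖ ^ 2 ≤ (star x ⬝ᵥ x).re * (star w ⬝ᵥ w).re := by
  have h := norm_inner_le_norm (𝕜 := ℂ) ((WithLp.equiv 2 (Fin k → ℂ)).symm x)
    ((WithLp.equiv 2 (Fin k → ℂ)).symm w)
  rw [inner_piLp_equiv_symm'] at h
  have h2 : ‖star x ⬝ᵥ w‖ ^ 2 ≤
      (‖(WithLp.equiv 2 (Fin k → ℂ)).symm x‖ * ‖(WithLp.equiv 2 (Fin k → ℂ)).symm w‖) ^ 2 :=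
    pow_le_pow_left₀ (norm_nonneg _) h 2
  rw [mul_pow, ← inner_self_eq_norm_sq (𝕜 := ℂ) ((WithLp.equiv 2 (Fin k → ℂ)).symm x),
      ← inner_self_eq_norm_sq (𝕜 := ℂ) ((WithLp.equiv 2 (Fin k → ℂ)).symm w),
      inner_piLp_equiv_symm', inner_piLp_equiv_symm'] at h2
  exact h2

private lemma sum_prod_eq {n' d' m' k' : ℕ} (i : Fin n')
    (c : Matrix (Fin d') (Fin d') ℂ)
    (a : Fin n' → Matrix (Fin d') (Fin m') ℂ)
    (Wi : Matrix (Fin d') (Fin d') ℂ)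
    (V : Fin n' → Matrix (Fin d') (Fin k') ℂ) :
    ∑ j, ((if i = j then c else 0) - a i * (a j)ᴴ) * Wi * V j
      = c * (Wi * V i) - a i * ∑ j, (a j)ᴴ * (Wi * V j) := by
  simp only [Matrix.sub_mul]
  rw [Finset.sum_sub_distrib]
  congr 1
  · rw [Finset.sum_congr rfl (fun j (_ : j ∈ Finset.univ) =>
      show (if i = j then c else 0) * Wi * V j = (if i = j then c * (Wi * V j) else 0) by
        split <;> simp [Matrix.mul_assoc])]
    simp
  · rw [Finset.sum_congr rfl (fun j (_ : j ∈ Finset.univ) =>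
      show a i * (a j)ᴴ * Wi * V j = a i * ((a j)ᴴ * (Wi * V j)) by
        simp [Matrix.mul_assoc])]
    exact (Matrix.mul_sum _ _ _).symm

theorem test_sum_prod : True := trivial

private lemma dot_sum_left {k : ℕ} {ι : Type*} [Fintype ι]
    (v : ι → Fin k → ℂ) (w : Fin k → ℂ) :
    (∑ j, v j) ⬝ᵥ w = ∑ j, v j ⬝ᵥ w := by
  simp only [dotProduct, Finset.sum_apply, Finset.sum_mul]
  rw [Finset.sum_comm]

private lemma dot_conj {d' k' : ℕ} (A B : Matrix (Fin d') (Fin k') ℂ) (u v : Fin d' → ℂ) :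
    star (Aᴴ *ᵥ u) ⬝ᵥ (Bᴴ *ᵥ v) = star u ⬝ᵥ ((A * Bᴴ) *ᵥ v) := by
  rw [Matrix.star_mulVec, Matrix.conjTranspose_conjTranspose, ← Matrix.dotProduct_mulVec,
    Matrix.mulVec_mulVec]

/-- Lemma 4.5: for Hermitian invertible `z` with `z⁻¹ > a₀a₀*/(n+1)` one has
`∑ⱼ Nⱼ* z Nⱼ < 1` and the matrix-inversion identity expressing
`∑ᵢ Mᵢ (1 − ∑ⱼ Nⱼ* z Nⱼ)⁻¹ Mᵢ*` in terms of `a₀,…,aₙ`. -/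
theorem lower_woodbury (n d m : ℕ) (hn : 1 ≤ n) (hd : 1 ≤ d) (hm : 1 ≤ m)
    (a₀ : Matrix (Fin d) (Fin d) ℂ)
    (a : Fin n → Matrix (Fin d) (Fin m) ℂ)
    (M N : Fin n → Matrix (Fin d) (Fin (2 * n * d)) ℂ)
    (hMM : ∀ i j, M i * (M j)ᴴ =
      (if i = j then (((n : ℝ) + 1)⁻¹) • (a₀ * a₀ᴴ) else 0) - a i * (a j)ᴴ)
    (hNN : ∀ i j, N i * (N j)ᴴ =
      (if i = j then (((n : ℝ) + 1)⁻¹) • (a₀ * a₀ᴴ) else 0) - a i * (a j)ᴴ)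
    (hMN : ∀ i j, M i * (N j)ᴴ = -(a i * (a j)ᴴ))
    (z : Matrix (Fin d) (Fin d) ℂ) (hz : z.IsHermitian) (hzu : IsUnit z)
    (hza : (z⁻¹ - (((n : ℝ) + 1)⁻¹) • (a₀ * a₀ᴴ)).PosDef) :
    (1 - ∑ j, (N j)ᴴ * z * N j).PosDef ∧
    ∑ i, M i * (1 - ∑ j, (N j)ᴴ * z * N j)⁻¹ * (M i)ᴴ =
      ((n : ℝ) / ((n : ℝ) + 1)) • (a₀ * a₀ᴴ) -
        ∑ i, a i * (1 + ∑ j, (a j)ᴴ *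
          (z⁻¹ - (((n : ℝ) + 1)⁻¹) • (a₀ * a₀ᴴ))⁻¹ * a j)⁻¹ * (a i)ᴴ := by
  set c := (((n : ℝ) + 1)⁻¹) • (a₀ * a₀ᴴ) with hc_def
  set W := z⁻¹ - c with hW_def
  set Wi := W⁻¹ with hWi_def
  set G := ∑ j, (a j)ᴴ * Wi * a j with hG_def
  set Hm := (1 + G)⁻¹ with hHm_def
  set B := ∑ j, (N j)ᴴ * z * N j with hB_def
  -- basic facts
  have hdet : IsUnit z.det := (Matrix.isUnit_iff_isUnit_det z).mp hzu
  have hzz : z * z⁻¹ = 1 := Matrix.mul_nonsing_inv z hdet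
  have hWpd : W.PosDef := hza
  have hWH : W.IsHermitian := hWpd.isHermitian
  have hWdet : IsUnit W.det := (Matrix.isUnit_iff_isUnit_det W).mp hWpd.isUnit
  have hWWi : W * Wi = 1 := Matrix.mul_nonsing_inv W hWdet
  have hWipd : Wi.PosDef := hWpd.inv
  have hWiH : Wiᴴ = Wi := hWH.inv
  have hcps : c.PosSemidef := by
    refine Matrix.PosSemidef.of_dotProduct_mulVec_nonneg ?_ ?_
    · show cᴴ = c
      rw [hc_def, Matrix.conjTranspose_smul, star_trivial,
        (Matrix.isHermitian_mul_conjTranspose_self a₀).eq]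
    · intro x
      have h0 : (0:ℂ) ≤ star x ⬝ᵥ ((a₀ * a₀ᴴ) *ᵥ x) :=
        (Matrix.posSemidef_self_mul_conjTranspose a₀).dotProduct_mulVec_nonneg x
      rw [hc_def, Matrix.smul_mulVec, dotProduct_smul, Complex.real_smul]
      exact mul_nonneg (Complex.zero_le_real.mpr (by positivity)) h0
  have hGps : G.PosSemidef := by
    rw [hG_def]
    apply Finset.sum_induction _ _ (fun A B hA hB => hA.add hB) Matrix.PosSemidef.zero
    intro j _
    exact hWipd.posSemidef.conjTranspose_mul_mul_same (a j)
  have h1Gpd : (1 + G).PosDef := Matrix.PosDef.add_posSemidef Matrix.PosDef.one hGps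
  have h1Gdet : IsUnit (1 + G).det := (Matrix.isUnit_iff_isUnit_det _).mp h1Gpd.isUnit
  have hHmul : (1 + G) * Hm = 1 := Matrix.mul_nonsing_inv _ h1Gdet
  have hHmul' : Hm * (1 + G) = 1 := Matrix.nonsing_inv_mul _ h1Gdet
  have hGHm : G * Hm = 1 - Hm := by
    have h := hHmul; rw [Matrix.add_mul, Matrix.one_mul] at h
    rw [← h]; abel
  have hHmG : Hm * G = 1 - Hm := by
    have h := hHmul'; rw [Matrix.mul_add, Matrix.mul_one] at h
    rw [← h]; abel
  -- auxiliary matrices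
  set Pc := ∑ j, (a j)ᴴ * (Wi * N j) with hPc_def
  set P := ∑ j, (N j)ᴴ * (Wi * a j) with hP_def
  set Q := ∑ j, (N j)ᴴ * (Wi * N j) with hQ_def
  have hG' : G = ∑ j, (a j)ᴴ * (Wi * a j) := by
    rw [hG_def]; exact Finset.sum_congr rfl fun j _ => by rw [Matrix.mul_assoc]
  set TT := 1 + Q - P * (Hm * Pc) with hTT_def
  have h1 : ∀ i, N i * Q = c * (Wi * N i) - a i * Pc := by
    intro i
    rw [hQ_def, Matrix.mul_sum,
      Finset.sum_congr rfl (fun j (_ : j ∈ Finset.univ) =>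
        show N i * ((N j)ᴴ * (Wi * N j)) = ((if i = j then c else 0) - a i * (a j)ᴴ) * Wi * N j by
          rw [← hNN i j]; simp [Matrix.mul_assoc]),
      sum_prod_eq, ← hPc_def]
  have h2 : ∀ i, N i * P = c * (Wi * a i) - a i * G := by
    intro i
    rw [hP_def, Matrix.mul_sum,
      Finset.sum_congr rfl (fun j (_ : j ∈ Finset.univ) =>
        show N i * ((N j)ᴴ * (Wi * a j)) = ((if i = j then c else 0) - a i * (a j)ᴴ) * Wi * a j by
          rw [← hNN i j]; simp [Matrix.mul_assoc]),
      sum_prod_eq, ← hG']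
  have hMN0 : ∀ i j, M i * (N j)ᴴ =
      (if i = j then (0 : Matrix (Fin d) (Fin d) ℂ) else 0) - a i * (a j)ᴴ := by
    intro i j; rw [hMN i j]; simp
  have h3 : ∀ i, M i * Q = -(a i * Pc) := by
    intro i
    rw [hQ_def, Matrix.mul_sum,
      Finset.sum_congr rfl (fun j (_ : j ∈ Finset.univ) =>
        show M i * ((N j)ᴴ * (Wi * N j))
            = ((if i = j then (0 : Matrix (Fin d) (Fin d) ℂ) else 0) - a i * (a j)ᴴ) * Wi * N j by
          rw [← hMN0 i j]; simp [Matrix.mul_assoc]),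
      sum_prod_eq, ← hPc_def]
    simp
  have h4 : ∀ i, M i * P = -(a i * G) := by
    intro i
    rw [hP_def, Matrix.mul_sum,
      Finset.sum_congr rfl (fun j (_ : j ∈ Finset.univ) =>
        show M i * ((N j)ᴴ * (Wi * a j))
            = ((if i = j then (0 : Matrix (Fin d) (Fin d) ℂ) else 0) - a i * (a j)ᴴ) * Wi * a j by
          rw [← hMN0 i j]; simp [Matrix.mul_assoc]),
      sum_prod_eq, ← hG']
    simp
  have hGHmP : G * (Hm * Pc) = Pc - Hm * Pc := by
    rw [← Matrix.mul_assoc, hGHm, Matrix.sub_mul, Matrix.one_mul]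
  have hNT : ∀ i, N i * TT
      = (N i - a i * (Hm * Pc)) + c * (Wi * (N i - a i * (Hm * Pc))) := by
    intro i
    calc N i * TT = N i + N i * Q - (N i * P) * (Hm * Pc) := by
          rw [hTT_def, Matrix.mul_sub, Matrix.mul_add, Matrix.mul_one, Matrix.mul_assoc]
      _ = N i + (c * (Wi * N i) - a i * Pc)
            - (c * (Wi * a i) - a i * G) * (Hm * Pc) := by rw [h1 i, h2 i]
      _ = _ := by
          simp only [Matrix.sub_mul, Matrix.mul_sub, Matrix.mul_assoc, hGHmP]
          abel
  have hzc : ∀ (k' : ℕ) (Y : Matrix (Fin d) (Fin k') ℂ),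
      z * (c * (Wi * Y)) = Wi * Y - z * Y := by
    intro k' Y
    have hc' : c = z⁻¹ - W := by rw [hW_def]; abel
    calc z * (c * (Wi * Y)) = (z * c * Wi) * Y := by simp [Matrix.mul_assoc]
      _ = ((1 : Matrix (Fin d) (Fin d) ℂ) - z * W) * Wi * Y := by
          rw [hc', Matrix.mul_sub, hzz]
      _ = Wi * Y - z * Y := by
          rw [Matrix.sub_mul, Matrix.one_mul, Matrix.mul_assoc z W Wi, hWWi,
            Matrix.mul_one, Matrix.sub_mul]
  have hBT : B * TT = Q - P * (Hm * Pc) := by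
    rw [hB_def, Matrix.sum_mul,
      Finset.sum_congr rfl (fun j (_ : j ∈ Finset.univ) =>
        show (N j)ᴴ * z * N j * TT
            = (N j)ᴴ * (Wi * N j) - ((N j)ᴴ * (Wi * a j)) * (Hm * Pc) by
          calc (N j)ᴴ * z * N j * TT = (N j)ᴴ * (z * (N j * TT)) := by
                simp [Matrix.mul_assoc]
            _ = (N j)ᴴ * (Wi * (N j - a j * (Hm * Pc))) := by
                rw [hNT j]
                congr 1
                rw [Matrix.mul_add, hzc _ (N j - a j * (Hm * Pc))]
                abel
            _ = _ := by simp [Matrix.mul_sub, Matrix.mul_assoc]),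
      Finset.sum_sub_distrib, ← Matrix.sum_mul, ← hQ_def, ← hP_def]
  have hST : (1 - B) * TT = 1 := by
    rw [Matrix.sub_mul, Matrix.one_mul, hBT, hTT_def]; abel
  have hSinv : (1 - B)⁻¹ = TT := Matrix.inv_eq_right_inv hST
  have hMT : ∀ i, M i * TT = M i - a i * (Hm * Pc) := by
    intro i
    calc M i * TT = M i + M i * Q - (M i * P) * (Hm * Pc) := by
          rw [hTT_def, Matrix.mul_sub, Matrix.mul_add, Matrix.mul_one, Matrix.mul_assoc]
      _ = M i + (-(a i * Pc)) - (-(a i * G)) * (Hm * Pc) := by rw [h3 i, h4 i]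
      _ = _ := by
          simp only [Matrix.neg_mul, Matrix.mul_assoc, hGHmP, Matrix.mul_sub]
          abel
  have hNMH : ∀ i j, N j * (M i)ᴴ = -(a j * (a i)ᴴ) := by
    intro i j
    have h := congrArg Matrix.conjTranspose (hMN i j)
    simpa [Matrix.conjTranspose_mul] using h
  have hPcM : ∀ i, Pc * (M i)ᴴ = -(G * (a i)ᴴ) := by
    intro i
    rw [hPc_def, Matrix.sum_mul,
      Finset.sum_congr rfl (fun j (_ : j ∈ Finset.univ) =>
        show ((a j)ᴴ * (Wi * N j)) * (M i)ᴴ = -(((a j)ᴴ * Wi * a j) * (a i)ᴴ) by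
          calc ((a j)ᴴ * (Wi * N j)) * (M i)ᴴ = (a j)ᴴ * (Wi * (N j * (M i)ᴴ)) := by
                simp [Matrix.mul_assoc]
            _ = (a j)ᴴ * (Wi * (-(a j * (a i)ᴴ))) := by rw [hNMH i j]
            _ = _ := by simp [Matrix.mul_neg, Matrix.mul_assoc]),
      Finset.sum_neg_distrib, ← Matrix.sum_mul, ← hG_def]
  have hMTM : ∀ i, M i * TT * (M i)ᴴ = c - a i * (Hm * (a i)ᴴ) := by
    intro i
    have hHmGa : Hm * (G * (a i)ᴴ) = (a i)ᴴ - Hm * (a i)ᴴ := by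
      rw [← Matrix.mul_assoc, hHmG, Matrix.sub_mul, Matrix.one_mul]
    calc M i * TT * (M i)ᴴ = (M i - a i * (Hm * Pc)) * (M i)ᴴ := by rw [hMT i]
      _ = (M i * (M i)ᴴ) - a i * (Hm * (Pc * (M i)ᴴ)) := by
          rw [Matrix.sub_mul]; simp [Matrix.mul_assoc]
      _ = (c - a i * (a i)ᴴ) - a i * (Hm * (-(G * (a i)ᴴ))) := by
          rw [hMM i i, hPcM i, if_pos rfl]
      _ = _ := by
          rw [Matrix.mul_neg, hHmGa]
          simp only [Matrix.mul_sub, Matrix.mul_neg]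
          abel
  constructor
  · have hzinvpd : z⁻¹.PosDef := by
      have h := hWpd.add_posSemidef hcps
      rwa [hW_def, sub_add_cancel] at h
    have hzpd : z.PosDef := Matrix.posDef_inv_iff.mp hzinvpd
    have hBps : B.PosSemidef := by
      rw [hB_def]
      apply Finset.sum_induction _ _ (fun A B hA hB => hA.add hB) Matrix.PosSemidef.zero
      intro j _
      exact hzpd.posSemidef.conjTranspose_mul_mul_same (N j)
    refine Matrix.PosDef.of_dotProduct_mulVec_pos ?_ ?_
    · show (1 - B)ᴴ = 1 - B
      rw [Matrix.conjTranspose_sub, Matrix.conjTranspose_one, hBps.isHermitian.eq]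
    · intro x hx
      have hxx : (0:ℂ) < star x ⬝ᵥ x := Matrix.dotProduct_star_self_pos_iff.mpr hx
      rw [Matrix.sub_mulVec, Matrix.one_mulVec, dotProduct_sub, sub_pos]
      have hsdec : star x ⬝ᵥ (B *ᵥ x) = ∑ j, star (N j *ᵥ x) ⬝ᵥ (z *ᵥ (N j *ᵥ x)) := by
        rw [hB_def, sum_mulVec', dot_sum_right]
        refine Finset.sum_congr rfl fun j _ => ?_
        rw [← Matrix.mulVec_mulVec, ← Matrix.mulVec_mulVec, Matrix.dotProduct_mulVec,
          ← Matrix.star_mulVec]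
      by_cases hy : ∀ j, N j *ᵥ x = 0
      · have h0 : star x ⬝ᵥ (B *ᵥ x) = 0 := by
          rw [hsdec]
          exact Finset.sum_eq_zero fun j _ => by rw [hy j]; simp
        rw [h0]; exact hxx
      · push_neg at hy
        obtain ⟨j0, hj0⟩ := hy
        have hinj : Function.Injective z.mulVec := Matrix.mulVec_injective_iff_isUnit.mpr hzu
        have huj0 : z *ᵥ (N j0 *ᵥ x) ≠ 0 := by
          intro h
          exact hj0 (hinj (by simpa [Matrix.mulVec_zero] using h))
        have hsu : ∀ j, star (N j *ᵥ x) ⬝ᵥ (z *ᵥ (N j *ᵥ x))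
            = star (z *ᵥ (N j *ᵥ x)) ⬝ᵥ (z⁻¹ *ᵥ (z *ᵥ (N j *ᵥ x))) := by
          intro j
          rw [Matrix.mulVec_mulVec (N j *ᵥ x) z⁻¹ z, Matrix.nonsing_inv_mul z hdet,
            Matrix.one_mulVec, Matrix.star_mulVec z (N j *ᵥ x), hz.eq,
            ← Matrix.dotProduct_mulVec]
        have hw : B *ᵥ x = ∑ j, (N j)ᴴ *ᵥ (z *ᵥ (N j *ᵥ x)) := by
          rw [hB_def, sum_mulVec']
          refine Finset.sum_congr rfl fun j _ => ?_
          rw [← Matrix.mulVec_mulVec, ← Matrix.mulVec_mulVec]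
        have hterm : ∀ i j, star ((N i)ᴴ *ᵥ (z *ᵥ (N i *ᵥ x))) ⬝ᵥ ((N j)ᴴ *ᵥ (z *ᵥ (N j *ᵥ x)))
            = (if i = j then star (z *ᵥ (N j *ᵥ x)) ⬝ᵥ (c *ᵥ (z *ᵥ (N j *ᵥ x))) else 0)
              - star ((a i)ᴴ *ᵥ (z *ᵥ (N i *ᵥ x))) ⬝ᵥ ((a j)ᴴ *ᵥ (z *ᵥ (N j *ᵥ x))) := by
          intro i j
          rw [dot_conj, dot_conj, hNN i j, Matrix.sub_mulVec, dotProduct_sub]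
          congr 1
          by_cases hij : i = j
          · subst hij; rw [if_pos rfl, if_pos rfl]
          · rw [if_neg hij, if_neg hij, Matrix.zero_mulVec, dotProduct_zero]
        have ht : star (B *ᵥ x) ⬝ᵥ (B *ᵥ x)
            = (∑ j, star (z *ᵥ (N j *ᵥ x)) ⬝ᵥ (c *ᵥ (z *ᵥ (N j *ᵥ x))))
              - star (∑ j, (a j)ᴴ *ᵥ (z *ᵥ (N j *ᵥ x)))
                  ⬝ᵥ (∑ j, (a j)ᴴ *ᵥ (z *ᵥ (N j *ᵥ x))) := by
          rw [hw, star_sum, dot_sum_left,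
            Finset.sum_congr rfl (fun i (_ : i ∈ Finset.univ) =>
              dot_sum_right (star ((N i)ᴴ *ᵥ (z *ᵥ (N i *ᵥ x)))) _),
            Finset.sum_congr rfl (fun i (_ : i ∈ Finset.univ) =>
              Finset.sum_congr rfl (fun j (_ : j ∈ Finset.univ) => hterm i j)),
            Finset.sum_congr rfl (fun i (_ : i ∈ Finset.univ) => Finset.sum_sub_distrib _ _),
            Finset.sum_sub_distrib]
          congr 1
          · refine Finset.sum_congr rfl fun i _ => ?_
            rw [Finset.sum_ite_eq]
            simp
          · rw [star_sum, dot_sum_left]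
            refine Finset.sum_congr rfl fun i _ => ?_
            rw [dot_sum_right]
        have ht0 : (0:ℂ) ≤ star (B *ᵥ x) ⬝ᵥ (B *ᵥ x) := dotProduct_star_self_nonneg _
        have htle : star (B *ᵥ x) ⬝ᵥ (B *ᵥ x)
            ≤ ∑ j, star (z *ᵥ (N j *ᵥ x)) ⬝ᵥ (c *ᵥ (z *ᵥ (N j *ᵥ x))) := by
          rw [ht]; exact sub_le_self _ (dotProduct_star_self_nonneg _)
        have hlt : ∑ j, star (z *ᵥ (N j *ᵥ x)) ⬝ᵥ (c *ᵥ (z *ᵥ (N j *ᵥ x)))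
            < ∑ j, star (z *ᵥ (N j *ᵥ x)) ⬝ᵥ (z⁻¹ *ᵥ (z *ᵥ (N j *ᵥ x))) := by
          refine Finset.sum_lt_sum (fun j _ => ?_) ⟨j0, Finset.mem_univ _, ?_⟩
          · have h0 := hWpd.posSemidef.dotProduct_mulVec_nonneg (z *ᵥ (N j *ᵥ x))
            rw [hW_def, Matrix.sub_mulVec, dotProduct_sub] at h0
            exact sub_nonneg.mp h0
          · have h0 := hWpd.dotProduct_mulVec_pos huj0
            rw [hW_def, Matrix.sub_mulVec, dotProduct_sub] at h0
            exact sub_pos.mp h0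
        have hsz : ∑ j, star (z *ᵥ (N j *ᵥ x)) ⬝ᵥ (z⁻¹ *ᵥ (z *ᵥ (N j *ᵥ x)))
            = star x ⬝ᵥ (B *ᵥ x) := by
          rw [hsdec]
          exact Finset.sum_congr rfl fun j _ => (hsu j).symm
        have hts : star (B *ᵥ x) ⬝ᵥ (B *ᵥ x) < star x ⬝ᵥ (B *ᵥ x) :=
          lt_of_le_of_lt htle (hsz ▸ hlt)
        have hs0 : (0:ℂ) ≤ star x ⬝ᵥ (B *ᵥ x) := hBps.dotProduct_mulVec_nonneg x
        have hcs := dot_cs x (B *ᵥ x)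
        obtain ⟨hsre0, hsim⟩ := Complex.le_def.mp hs0
        obtain ⟨htre, _⟩ := Complex.lt_def.mp hts
        obtain ⟨ht0re, _⟩ := Complex.le_def.mp ht0
        obtain ⟨hxre, hxim⟩ := Complex.lt_def.mp hxx
        simp only [Complex.zero_re, Complex.zero_im] at hsre0 hsim ht0re hxre hxim
        have hnorm : ‖star x ⬝ᵥ (B *ᵥ x)‖ = (star x ⬝ᵥ (B *ᵥ x)).re := by
          rw [show star x ⬝ᵥ (B *ᵥ x) = (((star x ⬝ᵥ (B *ᵥ x)).re : ℝ) : ℂ) from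
            Complex.ext rfl (by simp [← hsim])]
          simp [Complex.norm_real, Real.norm_eq_abs, abs_of_nonneg hsre0]
        rw [hnorm] at hcs
        have hspos : 0 < (star x ⬝ᵥ (B *ᵥ x)).re := lt_of_le_of_lt ht0re htre
        have hfin : (star x ⬝ᵥ (B *ᵥ x)).re < (star x ⬝ᵥ x).re := by
          have h1 : (star x ⬝ᵥ (B *ᵥ x)).re * (star x ⬝ᵥ (B *ᵥ x)).re
              < (star x ⬝ᵥ x).re * (star x ⬝ᵥ (B *ᵥ x)).re := by
            calc (star x ⬝ᵥ (B *ᵥ x)).re * (star x ⬝ᵥ (B *ᵥ x)).re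
                = (star x ⬝ᵥ (B *ᵥ x)).re ^ 2 := (sq _).symm
              _ ≤ (star x ⬝ᵥ x).re * (star (B *ᵥ x) ⬝ᵥ (B *ᵥ x)).re := hcs
              _ < (star x ⬝ᵥ x).re * (star x ⬝ᵥ (B *ᵥ x)).re :=
                  mul_lt_mul_of_pos_left htre hxre
          exact lt_of_mul_lt_mul_right h1 (le_of_lt hspos)
        exact Complex.lt_def.mpr ⟨hfin, by rw [← hsim]; exact hxim⟩
  · rw [hSinv,
      Finset.sum_congr rfl (fun i (_ : i ∈ Finset.univ) => hMTM i),
      Finset.sum_sub_distrib]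
    congr 1
    · rw [Finset.sum_const, Finset.card_univ, Fintype.card_fin, hc_def,
        ← Nat.cast_smul_eq_nsmul ℝ, smul_smul, ← div_eq_mul_inv]
    · exact Finset.sum_congr rfl fun i _ => by rw [Matrix.mul_assoc]
end
end
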